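/- arXiv:1704.03195 — 5 statements merged into one kernel-verified Lean document; each statement's English description precedes it below -/
import Mathlib

section
/- Generalized coarea formula: let n ≥ 1, r > 0, Ω ⊆ ℝⁿ be open, and let u be a locally integrable real-valued function on the open r-neighborhood Ω ⊕ B_r. Then ∫_Ω osc_{B_r(x)} u dx = 2r ∫_{-∞}^{+∞} Per_r({u > s}, Ω) ds, as an identity in [0, +∞]. -/
open MeasureTheory Metric Set Filter Topology
open scoped RealInnerProductSpace ENNReal

noncomputable section

/-- The set of points of Lebesgue density one of `E`. -/
def densityOnePoints (n : ℕ) (E : Set (EuclideanSpace ℝ (Fin n))) :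
    Set (EuclideanSpace ℝ (Fin n)) :=
  {x | Tendsto (fun ρ : ℝ => volume (E ∩ ball x ρ) / volume (ball x ρ)) (𝓝[>] 0) (𝓝 1)}

/-- The `r`-perimeter `Per_r(E, Ω) = (1/(2r)) Lⁿ((∂E ⊕ B_r) ∩ Ω)`, where `E` is identified with
its points of density one, `∂E` is the topological boundary of that set, and
`A ⊕ B_r` is the open `r`-neighbourhood of `A`. -/
def perR (n : ℕ) (r : ℝ) (E Ω : Set (EuclideanSpace ℝ (Fin n))) : ℝ≥0∞ :=
  volume (Metric.thickening r (frontier (densityOnePoints n E)) ∩ Ω) / ENNReal.ofReal (2 * r)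

/-- The oscillation `osc_{B_r(x)} u = esssup_{B_r(x)} u - essinf_{B_r(x)} u`, as an element
of `[0, ∞]`, expressed as the essential supremum of `u y - u z` over `B_r(x) × B_r(x)`. -/
def oscBall (n : ℕ) (r : ℝ) (u : EuclideanSpace ℝ (Fin n) → ℝ)
    (x : EuclideanSpace ℝ (Fin n)) : ℝ≥0∞ :=
  essSup (fun p : EuclideanSpace ℝ (Fin n) × EuclideanSpace ℝ (Fin n) =>
      ENNReal.ofReal (u p.1 - u p.2))
    ((volume.restrict (ball x r)).prod (volume.restrict (ball x r)))

lemma P_rat (n : ℕ) (r : ℝ) (u : EuclideanSpace ℝ (Fin n) → ℝ)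
    (x : EuclideanSpace ℝ (Fin n)) (s : ℝ) :
    0 < volume ({y | s < u y} ∩ ball x r) ↔
      ∃ q : ℚ, s < (q:ℝ) ∧ 0 < volume ({y | (q:ℝ) < u y} ∩ ball x r) := by
  constructor
  · intro h
    have hU : {y | s < u y} ∩ ball x r =
        ⋃ q : {q : ℚ // s < (q:ℝ)}, {y | ((q:ℚ):ℝ) < u y} ∩ ball x r := by
      ext y
      simp only [mem_inter_iff, mem_iUnion, mem_setOf_eq]
      constructor
      · rintro ⟨hy1, hy2⟩
        obtain ⟨q, hq1, hq2⟩ := exists_rat_btwn hy1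
        exact ⟨⟨q, hq1⟩, hq2, hy2⟩
      · rintro ⟨q, hy1, hy2⟩
        exact ⟨lt_trans q.2 hy1, hy2⟩
    obtain ⟨q, hq⟩ := exists_measure_pos_of_not_measure_iUnion_null
      (s := fun q : {q : ℚ // s < (q:ℝ)} => {y | ((q:ℚ):ℝ) < u y} ∩ ball x r)
      (by rw [← hU]; exact h.ne')
    exact ⟨q, q.2, hq⟩
  · rintro ⟨q, hq1, hq2⟩
    refine hq2.trans_le (measure_mono (inter_subset_inter_left _ ?_))
    intro y hy
    exact lt_trans hq1 hy

lemma Q_rat (n : ℕ) (r : ℝ) (u : EuclideanSpace ℝ (Fin n) → ℝ)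
    (x : EuclideanSpace ℝ (Fin n)) (s : ℝ) :
    0 < volume ({y | u y < s} ∩ ball x r) ↔
      ∃ q : ℚ, (q:ℝ) < s ∧ 0 < volume ({y | u y < (q:ℝ)} ∩ ball x r) := by
  constructor
  · intro h
    have hU : {y | u y < s} ∩ ball x r =
        ⋃ q : {q : ℚ // (q:ℝ) < s}, {y | u y < ((q:ℚ):ℝ)} ∩ ball x r := by
      ext y
      simp only [mem_inter_iff, mem_iUnion, mem_setOf_eq]
      constructor
      · rintro ⟨hy1, hy2⟩
        obtain ⟨q, hq1, hq2⟩ := exists_rat_btwn hy1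
        exact ⟨⟨q, hq2⟩, hq1, hy2⟩
      · rintro ⟨q, hy1, hy2⟩
        exact ⟨lt_trans hy1 q.2, hy2⟩
    obtain ⟨q, hq⟩ := exists_measure_pos_of_not_measure_iUnion_null
      (s := fun q : {q : ℚ // (q:ℝ) < s} => {y | u y < ((q:ℚ):ℝ)} ∩ ball x r)
      (by rw [← hU]; exact h.ne')
    exact ⟨q, q.2, hq⟩
  · rintro ⟨q, hq1, hq2⟩
    refine hq2.trans_le (measure_mono (inter_subset_inter_left _ ?_))
    intro y hy
    exact lt_trans hy hq1

lemma P_anti (n : ℕ) (r : ℝ) (u : EuclideanSpace ℝ (Fin n) → ℝ)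
    (x : EuclideanSpace ℝ (Fin n)) {s t : ℝ} (hst : s ≤ t)
    (h : 0 < volume ({y | t < u y} ∩ ball x r)) :
    0 < volume ({y | s < u y} ∩ ball x r) :=
  h.trans_le (measure_mono (inter_subset_inter_left _ fun y hy => lt_of_le_of_lt hst hy))

lemma Q_mono (n : ℕ) (r : ℝ) (u : EuclideanSpace ℝ (Fin n) → ℝ)
    (x : EuclideanSpace ℝ (Fin n)) {s t : ℝ} (hst : s ≤ t)
    (h : 0 < volume ({y | u y < s} ∩ ball x r)) :
    0 < volume ({y | u y < t} ∩ ball x r) :=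
  h.trans_le (measure_mono (inter_subset_inter_left _ fun y hy => lt_of_lt_of_le hy hst))

lemma isOpen_Isec (n : ℕ) (r : ℝ) (u : EuclideanSpace ℝ (Fin n) → ℝ)
    (x : EuclideanSpace ℝ (Fin n)) :
    IsOpen {s : ℝ | 0 < volume ({y | s < u y} ∩ ball x r) ∧
      0 < volume ({y | u y < s} ∩ ball x r)} := by
  have h1 : {s : ℝ | 0 < volume ({y | s < u y} ∩ ball x r)} =
      ⋃ q : {q : ℚ // 0 < volume ({y | ((q:ℚ):ℝ) < u y} ∩ ball x r)}, Iio ((q:ℚ):ℝ) := by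
    ext s
    simp only [mem_setOf_eq, mem_iUnion, mem_Iio]
    constructor
    · intro h
      obtain ⟨q, hq1, hq2⟩ := (P_rat n r u x s).1 h
      exact ⟨⟨q, hq2⟩, hq1⟩
    · rintro ⟨q, hq⟩
      exact (P_rat n r u x s).2 ⟨q, hq, q.2⟩
  have h2 : {s : ℝ | 0 < volume ({y | u y < s} ∩ ball x r)} =
      ⋃ q : {q : ℚ // 0 < volume ({y | u y < ((q:ℚ):ℝ)} ∩ ball x r)}, Ioi ((q:ℚ):ℝ) := by
    ext s
    simp only [mem_setOf_eq, mem_iUnion, mem_Ioi]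
    constructor
    · intro h
      obtain ⟨q, hq1, hq2⟩ := (Q_rat n r u x s).1 h
      exact ⟨⟨q, hq2⟩, hq1⟩
    · rintro ⟨q, hq⟩
      exact (Q_rat n r u x s).2 ⟨q, hq, q.2⟩
  have h3 : {s : ℝ | 0 < volume ({y | s < u y} ∩ ball x r) ∧
      0 < volume ({y | u y < s} ∩ ball x r)} =
      {s : ℝ | 0 < volume ({y | s < u y} ∩ ball x r)} ∩
      {s : ℝ | 0 < volume ({y | u y < s} ∩ ball x r)} := rfl
  rw [h3, h1, h2]
  exact IsOpen.inter (isOpen_iUnion fun q => isOpen_Iio) (isOpen_iUnion fun q => isOpen_Ioi)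

lemma osc_eq (n : ℕ) (r : ℝ) (hr : 0 < r)
    (u : EuclideanSpace ℝ (Fin n) → ℝ) (hu : Measurable u)
    (x : EuclideanSpace ℝ (Fin n)) :
    essSup (fun p : EuclideanSpace ℝ (Fin n) × EuclideanSpace ℝ (Fin n) =>
        ENNReal.ofReal (u p.1 - u p.2))
      ((volume.restrict (ball x r)).prod (volume.restrict (ball x r)))
    = volume {s : ℝ | 0 < volume ({y | s < u y} ∩ ball x r) ∧
        0 < volume ({y | u y < s} ∩ ball x r)} := by
  set μx := (volume : Measure (EuclideanSpace ℝ (Fin n))).restrict (ball x r) with hμx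
  set π := μx.prod μx with hπ
  set h : EuclideanSpace ℝ (Fin n) × EuclideanSpace ℝ (Fin n) → ℝ≥0∞ :=
    fun p => ENNReal.ofReal (u p.1 - u p.2) with hh
  set I := {s : ℝ | 0 < volume ({y | s < u y} ∩ ball x r) ∧
      0 < volume ({y | u y < s} ∩ ball x r)} with hI
  have pairbound : ∀ a b : ℝ, 0 < volume ({y | b < u y} ∩ ball x r) →
      0 < volume ({y | u y < a} ∩ ball x r) → ENNReal.ofReal (b - a) ≤ essSup h π := by
    intro a b hPb hQa
    set S := ({y | b < u y} ∩ ball x r) ×ˢ ({y | u y < a} ∩ ball x r) with hS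
    have hμx1 : μx ({y | b < u y} ∩ ball x r) = volume ({y | b < u y} ∩ ball x r) := by
      rw [hμx, Measure.restrict_apply ((measurableSet_lt measurable_const hu).inter
        measurableSet_ball), inter_assoc, inter_self]
    have hμx2 : μx ({y | u y < a} ∩ ball x r) = volume ({y | u y < a} ∩ ball x r) := by
      rw [hμx, Measure.restrict_apply ((measurableSet_lt hu measurable_const).inter
        measurableSet_ball), inter_assoc, inter_self]
    have hπS : 0 < π S := by
      rw [hπ, hS, Measure.prod_prod, hμx1, hμx2]
      exact ENNReal.mul_pos hPb.ne' hQa.ne'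
    have hae : ∀ᵐ p ∂π, h p ≤ essSup h π := ENNReal.ae_le_essSup h
    have hne : (S ∩ {p | h p ≤ essSup h π}).Nonempty := by
      by_contra hc
      rw [not_nonempty_iff_eq_empty] at hc
      have hsub : S ⊆ {p | ¬ h p ≤ essSup h π} := by
        intro p hp
        by_contra hp2
        simp only [mem_setOf_eq, not_not] at hp2
        exact eq_empty_iff_forall_notMem.1 hc p ⟨hp, hp2⟩
      have h0 : π {p | ¬ h p ≤ essSup h π} = 0 := ae_iff.1 hae
      exact absurd (measure_mono_null hsub h0) hπS.ne'
    obtain ⟨p, hpS, hple⟩ := hne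
    refine le_trans ?_ hple
    have h1 : b < u p.1 := hpS.1.1
    have h2 : u p.2 < a := hpS.2.1
    exact ENNReal.ofReal_le_ofReal (by linarith)
  refine le_antisymm ?_ ?_
  · -- essSup ≤ volume I
    set N1 := {y : EuclideanSpace ℝ (Fin n) |
      ∃ q : ℚ, ¬ 0 < volume ({y' | ((q:ℚ):ℝ) < u y'} ∩ ball x r) ∧ ((q:ℚ):ℝ) < u y} with hN1
    set N2 := {y : EuclideanSpace ℝ (Fin n) |
      ∃ q : ℚ, ¬ 0 < volume ({y' | u y' < ((q:ℚ):ℝ)} ∩ ball x r) ∧ u y < ((q:ℚ):ℝ)} with hN2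
    have hμN1 : μx N1 = 0 := by
      have hU : N1 = ⋃ q : ℚ, {y | ¬ 0 < volume ({y' | ((q:ℚ):ℝ) < u y'} ∩ ball x r) ∧
          ((q:ℚ):ℝ) < u y} := by
        ext y; simp only [hN1, mem_setOf_eq, mem_iUnion]
      rw [hU]
      refine measure_iUnion_null fun q => ?_
      by_cases hq : 0 < volume ({y' | ((q:ℚ):ℝ) < u y'} ∩ ball x r)
      · have he : {y | ¬ 0 < volume ({y' | ((q:ℚ):ℝ) < u y'} ∩ ball x r) ∧
            ((q:ℚ):ℝ) < u y} = ∅ := by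
          ext y; simp [hq]
        rw [he]; exact measure_empty
      · have h0 : volume ({y' | ((q:ℚ):ℝ) < u y'} ∩ ball x r) = 0 := by simpa using hq
        have hμ : μx {y | ((q:ℚ):ℝ) < u y} = 0 := by
          rw [hμx, Measure.restrict_apply (measurableSet_lt measurable_const hu)]
          exact h0
        exact measure_mono_null (fun y hy => hy.2) hμ
    have hμN2 : μx N2 = 0 := by
      have hU : N2 = ⋃ q : ℚ, {y | ¬ 0 < volume ({y' | u y' < ((q:ℚ):ℝ)} ∩ ball x r) ∧
          u y < ((q:ℚ):ℝ)} := by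
        ext y; simp only [hN2, mem_setOf_eq, mem_iUnion]
      rw [hU]
      refine measure_iUnion_null fun q => ?_
      by_cases hq : 0 < volume ({y' | u y' < ((q:ℚ):ℝ)} ∩ ball x r)
      · have he : {y | ¬ 0 < volume ({y' | u y' < ((q:ℚ):ℝ)} ∩ ball x r) ∧
            u y < ((q:ℚ):ℝ)} = ∅ := by
          ext y; simp [hq]
        rw [he]; exact measure_empty
      · have h0 : volume ({y' | u y' < ((q:ℚ):ℝ)} ∩ ball x r) = 0 := by simpa using hq
        have hμ : μx {y | u y < ((q:ℚ):ℝ)} = 0 := by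
          rw [hμx, Measure.restrict_apply (measurableSet_lt hu measurable_const)]
          exact h0
        exact measure_mono_null (fun y hy => hy.2) hμ
    have hbad : π {p | ¬ h p ≤ volume I} = 0 := by
      have hsub : {p : EuclideanSpace ℝ (Fin n) × EuclideanSpace ℝ (Fin n) |
          ¬ h p ≤ volume I} ⊆ (N1 ×ˢ univ) ∪ (univ ×ˢ N2) := by
        intro p hp
        by_contra hpc
        rw [mem_union, not_or] at hpc
        have hp1 : p.1 ∉ N1 := fun hm => hpc.1 ⟨hm, mem_univ _⟩
        have hp2 : p.2 ∉ N2 := fun hm => hpc.2 ⟨mem_univ _, hm⟩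
        apply hp
        rcases le_or_gt (u p.1) (u p.2) with hle | hlt
        · have : h p = 0 := ENNReal.ofReal_of_nonpos (by linarith)
          rw [this]; exact zero_le
        · have hIoo : Ioo (u p.2) (u p.1) ⊆ I := by
            intro s hs
            constructor
            · by_contra hPs
              obtain ⟨q, hq1, hq2⟩ := exists_rat_btwn hs.2
              have hPq : ¬ 0 < volume ({y' | ((q:ℚ):ℝ) < u y'} ∩ ball x r) :=
                fun hc => hPs (P_anti n r u x (le_of_lt hq1) hc)
              exact hp1 ⟨q, hPq, hq2⟩
            · by_contra hQs
              obtain ⟨q, hq1, hq2⟩ := exists_rat_btwn hs.1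
              have hQq : ¬ 0 < volume ({y' | u y' < ((q:ℚ):ℝ)} ∩ ball x r) :=
                fun hc => hQs (Q_mono n r u x (le_of_lt hq2) hc)
              exact hp2 ⟨q, hQq, hq1⟩
          calc h p = volume (Ioo (u p.2) (u p.1)) := by rw [Real.volume_Ioo]
            _ ≤ volume I := measure_mono hIoo
      refine measure_mono_null hsub ?_
      have hle := measure_union_le (μ := π) (N1 ×ˢ univ) (univ ×ˢ N2)
      have e1 : π (N1 ×ˢ univ) = 0 := by
        rw [hπ, Measure.prod_prod, hμN1, zero_mul]
      have e2 : π (univ ×ˢ N2) = 0 := by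
        rw [hπ, Measure.prod_prod, hμN2, mul_zero]
      rw [e1, e2, add_zero] at hle
      exact le_antisymm hle zero_le
    exact essSup_le_of_ae_le _ (ae_iff.2 hbad)
  · -- volume I ≤ essSup
    have hIcc : ∀ (q1 q2 : ℝ), q1 ∈ I → q2 ∈ I → Icc q1 q2 ⊆ I := by
      intro q1 q2 h1 h2 s hs
      exact ⟨P_anti n r u x hs.2 h2.1, Q_mono n r u x hs.1 h1.2⟩
    have hcup : I = ⋃ i : {p : ℚ × ℚ // ((p.1:ℝ) ∈ I) ∧ ((p.2:ℝ) ∈ I)},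
        Icc ((i.1.1:ℚ):ℝ) ((i.1.2:ℚ):ℝ) := by
      apply Subset.antisymm
      · intro s hs
        obtain ⟨ε, hε, hb⟩ := Metric.isOpen_iff.1 (isOpen_Isec n r u x) s hs
        obtain ⟨q1, hq11, hq12⟩ := exists_rat_btwn (show s - ε < s by linarith)
        obtain ⟨q2, hq21, hq22⟩ := exists_rat_btwn (show s < s + ε by linarith)
        have hq1I : (q1:ℝ) ∈ I :=
          hb (by rw [mem_ball, Real.dist_eq, abs_lt]; constructor <;> linarith)
        have hq2I : (q2:ℝ) ∈ I :=
          hb (by rw [mem_ball, Real.dist_eq, abs_lt]; constructor <;> linarith)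
        exact mem_iUnion.2 ⟨⟨(q1, q2), hq1I, hq2I⟩, le_of_lt hq12, le_of_lt hq21⟩
      · refine iUnion_subset fun i => hIcc _ _ i.2.1 i.2.2
    have hdir : Directed (· ⊆ ·) (fun i : {p : ℚ × ℚ // ((p.1:ℝ) ∈ I) ∧ ((p.2:ℝ) ∈ I)} =>
        Icc ((i.1.1:ℚ):ℝ) ((i.1.2:ℚ):ℝ)) := by
      rintro ⟨⟨a1, a2⟩, ha1, ha2⟩ ⟨⟨b1, b2⟩, hb1, hb2⟩
      refine ⟨⟨(min a1 b1, max a2 b2), ?_, ?_⟩, ?_, ?_⟩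
      · show ((min a1 b1 : ℚ) : ℝ) ∈ I
        rw [Rat.cast_min]
        rcases le_total (a1:ℝ) (b1:ℝ) with hle | hle
        · rwa [min_eq_left hle]
        · rwa [min_eq_right hle]
      · show ((max a2 b2 : ℚ) : ℝ) ∈ I
        rw [Rat.cast_max]
        rcases le_total (a2:ℝ) (b2:ℝ) with hle | hle
        · rwa [max_eq_right hle]
        · rwa [max_eq_left hle]
      · refine Icc_subset_Icc ?_ ?_
        · rw [Rat.cast_min]; exact min_le_left _ _
        · rw [Rat.cast_max]; exact le_max_left _ _
      · refine Icc_subset_Icc ?_ ?_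
        · rw [Rat.cast_min]; exact min_le_right _ _
        · rw [Rat.cast_max]; exact le_max_right _ _
    calc volume I = ⨆ i : {p : ℚ × ℚ // ((p.1:ℝ) ∈ I) ∧ ((p.2:ℝ) ∈ I)},
        volume (Icc ((i.1.1:ℚ):ℝ) ((i.1.2:ℚ):ℝ)) := by
          conv_lhs => rw [hcup]
          exact Directed.measure_iUnion hdir
      _ ≤ essSup h π := by
          refine iSup_le fun i => ?_
          rw [Real.volume_Icc]
          exact pairbound _ _ i.2.2.1 i.2.1.2

lemma density_ae (n : ℕ) (hn : 1 ≤ n) (W : Set (EuclideanSpace ℝ (Fin n))) (hW : MeasurableSet W) :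
    ∀ᵐ y ∂(volume : Measure (EuclideanSpace ℝ (Fin n))),
      (y ∈ W → y ∈ densityOnePoints n W) ∧ (y ∉ W → y ∉ densityOnePoints n W) := by
  have : Nontrivial (EuclideanSpace ℝ (Fin n)) := by
    have : Nonempty (Fin n) := ⟨⟨0, hn⟩⟩
    infer_instance
  filter_upwards [Besicovitch.ae_tendsto_measure_inter_div_of_measurableSet volume hW]
  intro y hy
  have heq : (fun ρ : ℝ => volume (W ∩ closedBall y ρ) / volume (closedBall y ρ))
      =ᶠ[𝓝[>] (0:ℝ)] (fun ρ : ℝ => volume (W ∩ ball y ρ) / volume (ball y ρ)) := by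
    filter_upwards [self_mem_nhdsWithin] with ρ (hρ : (0:ℝ) < ρ)
    have hs : volume (sphere y ρ) = 0 := Measure.addHaar_sphere volume y ρ
    have h1 : volume (W ∩ closedBall y ρ) = volume (W ∩ ball y ρ) := by
      refine le_antisymm ?_ (measure_mono (inter_subset_inter_right _ ball_subset_closedBall))
      calc volume (W ∩ closedBall y ρ) ≤ volume ((W ∩ ball y ρ) ∪ sphere y ρ) := by
            refine measure_mono ?_
            rw [← ball_union_sphere]
            intro z hz
            rcases hz.2 with h | h
            · exact Or.inl ⟨hz.1, h⟩
            · exact Or.inr h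
        _ ≤ volume (W ∩ ball y ρ) + volume (sphere y ρ) := measure_union_le _ _
        _ = volume (W ∩ ball y ρ) := by rw [hs, add_zero]
    have h2 : volume (closedBall y ρ) = volume (ball y ρ) := by
      refine le_antisymm ?_ (measure_mono ball_subset_closedBall)
      calc volume (closedBall y ρ) = volume (ball y ρ ∪ sphere y ρ) := by rw [ball_union_sphere]
        _ ≤ volume (ball y ρ) + volume (sphere y ρ) := measure_union_le _ _
        _ = volume (ball y ρ) := by rw [hs, add_zero]
    simp [h1, h2]
  constructor
  · intro hyW
    have : Tendsto (fun ρ : ℝ => volume (W ∩ closedBall y ρ) / volume (closedBall y ρ))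
        (𝓝[>] 0) (𝓝 1) := by
      have := hy
      rwa [indicator_of_mem hyW] at this
    exact (this.congr' heq)
  · intro hyW hyD
    have h0 : Tendsto (fun ρ : ℝ => volume (W ∩ ball y ρ) / volume (ball y ρ))
        (𝓝[>] 0) (𝓝 0) := by
      have := hy
      rw [indicator_of_notMem hyW] at this
      exact this.congr' heq
    have h1 : Tendsto (fun ρ : ℝ => volume (W ∩ ball y ρ) / volume (ball y ρ))
        (𝓝[>] 0) (𝓝 1) := hyD
    exact zero_ne_one (tendsto_nhds_unique h0 h1)

lemma isOpen_posMeas (n : ℕ) (r : ℝ) (S : Set (EuclideanSpace ℝ (Fin n))) :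
    IsOpen {x : EuclideanSpace ℝ (Fin n) | 0 < volume (S ∩ ball x r)} := by
  rw [Metric.isOpen_iff]
  intro x hx
  have hU : S ∩ ball x r = ⋃ q : {q : ℚ // (q:ℝ) < r}, S ∩ ball x (q:ℝ) := by
    ext y
    simp only [mem_inter_iff, mem_iUnion, mem_ball]
    constructor
    · rintro ⟨hyS, hyb⟩
      obtain ⟨q, hq1, hq2⟩ := exists_rat_btwn hyb
      exact ⟨⟨q, hq2⟩, hyS, hq1⟩
    · rintro ⟨q, hyS, hyb⟩
      exact ⟨hyS, hyb.trans q.2⟩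
  obtain ⟨q, hq⟩ := exists_measure_pos_of_not_measure_iUnion_null
    (s := fun q : {q : ℚ // (q:ℝ) < r} => S ∩ ball x (q:ℝ)) (by rw [← hU]; exact hx.ne')
  refine ⟨r - q, by linarith [q.2], ?_⟩
  intro x' hx'
  have hsub : ball x (q:ℝ) ⊆ ball x' r := by
    apply ball_subset_ball'
    rw [mem_ball] at hx'
    have := hx'
    rw [dist_comm] at this
    linarith
  exact lt_of_lt_of_le hq (measure_mono (inter_subset_inter_right _ hsub))

lemma claim1 (n : ℕ) (hn : 1 ≤ n) (r : ℝ) (hr : 0 < r)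
    (u : EuclideanSpace ℝ (Fin n) → ℝ) (hu : Measurable u)
    (x : EuclideanSpace ℝ (Fin n)) (s : ℝ)
    (hP : 0 < volume ({y | s < u y} ∩ ball x r))
    (hQ : 0 < volume ({y | u y < s} ∩ ball x r)) :
    x ∈ thickening r (frontier (densityOnePoints n {y | s < u y})) := by
  set W : Set (EuclideanSpace ℝ (Fin n)) := {y | s < u y} with hW
  set D := densityOnePoints n W with hD
  have hae := density_ae n hn W (measurableSet_lt measurable_const hu)
  have h1 : volume (W \ D) = 0 := by
    have hh : ∀ᵐ y ∂(volume : Measure (EuclideanSpace ℝ (Fin n))), y ∉ W \ D := by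
      filter_upwards [hae] with y hy
      rintro ⟨hyW, hyD⟩
      exact hyD (hy.1 hyW)
    exact measure_eq_zero_iff_ae_notMem.2 hh
  have h2 : volume (Wᶜ ∩ D) = 0 := by
    have hh : ∀ᵐ y ∂(volume : Measure (EuclideanSpace ℝ (Fin n))), y ∉ Wᶜ ∩ D := by
      filter_upwards [hae] with y hy
      rintro ⟨hyW, hyD⟩
      exact hy.2 hyW hyD
    exact measure_eq_zero_iff_ae_notMem.2 hh
  have hDB : 0 < volume (D ∩ ball x r) := by
    have hsub : W ∩ ball x r ⊆ (D ∩ ball x r) ∪ (W \ D) := by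
      intro y hy
      by_cases hyD : y ∈ D
      · exact Or.inl ⟨hyD, hy.2⟩
      · exact Or.inr ⟨hy.1, hyD⟩
    have hle := measure_union_le (μ := (volume : Measure (EuclideanSpace ℝ (Fin n))))
      (D ∩ ball x r) (W \ D)
    have := (measure_mono hsub).trans hle
    rw [h1, add_zero] at this
    exact hP.trans_le this
  have hBD : 0 < volume (ball x r \ D) := by
    have hsub : {y | u y < s} ∩ ball x r ⊆ (ball x r \ D) ∪ (Wᶜ ∩ D) := by
      intro y hy
      have hyW : y ∉ W := fun h => lt_asymm (show u y < s from hy.1) (show s < u y from h)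
      by_cases hyD : y ∈ D
      · exact Or.inr ⟨hyW, hyD⟩
      · exact Or.inl ⟨hy.2, hyD⟩
    have hle := measure_union_le (μ := (volume : Measure (EuclideanSpace ℝ (Fin n))))
      (ball x r \ D) (Wᶜ ∩ D)
    have := (measure_mono hsub).trans hle
    rw [h2, add_zero] at this
    exact hQ.trans_le this
  obtain ⟨z1, hz1⟩ := nonempty_of_measure_ne_zero hDB.ne'
  obtain ⟨z2, hz2⟩ := nonempty_of_measure_ne_zero hBD.ne'
  have hfront : (ball x r ∩ frontier D).Nonempty := by
    by_contra hemp
    rw [not_nonempty_iff_eq_empty] at hemp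
    have hconn : IsPreconnected (ball x r) := (convex_ball x r).isPreconnected
    have hcover : ball x r ⊆ interior D ∪ (closure D)ᶜ := by
      intro y hy
      by_cases hc : y ∈ closure D
      · left
        by_contra hint
        exact eq_empty_iff_forall_notMem.1 hemp y ⟨hy, hc, hint⟩
      · exact Or.inr hc
    have hne1 : (ball x r ∩ interior D).Nonempty := by
      refine ⟨z1, hz1.2, ?_⟩
      by_contra hint
      exact eq_empty_iff_forall_notMem.1 hemp z1 ⟨hz1.2, subset_closure hz1.1, hint⟩
    have hne2 : (ball x r ∩ (closure D)ᶜ).Nonempty := by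
      refine ⟨z2, hz2.1, ?_⟩
      intro hcl
      have hint : z2 ∉ interior D := fun h => hz2.2 (interior_subset h)
      exact eq_empty_iff_forall_notMem.1 hemp z2 ⟨hz2.1, hcl, hint⟩
    obtain ⟨w, -, hw2, hw3⟩ := hconn (interior D) (closure D)ᶜ isOpen_interior
      isClosed_closure.isOpen_compl hcover hne1 hne2
    exact hw3 (subset_closure (interior_subset hw2))
  obtain ⟨z, hzb, hzf⟩ := hfront
  rw [mem_thickening_iff]
  rw [mem_ball] at hzb
  exact ⟨z, hzf, by rw [dist_comm]; exact hzb⟩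

lemma claim2P (n : ℕ) (r : ℝ) (hr : 0 < r)
    (u : EuclideanSpace ℝ (Fin n) → ℝ)
    (x : EuclideanSpace ℝ (Fin n)) (s s' : ℝ) (hss : s' < s)
    (hx : x ∈ thickening r (frontier (densityOnePoints n {y | s < u y}))) :
    0 < volume ({y | s' < u y} ∩ ball x r) := by
  by_contra h0'
  have h0 : volume ({y | s' < u y} ∩ ball x r) = 0 := by
    simpa using h0'
  set W : Set (EuclideanSpace ℝ (Fin n)) := {y | s < u y} with hW
  set D := densityOnePoints n W with hD
  have hBD : ∀ y ∈ ball x r, y ∉ D := by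
    intro y hyb hyD
    rw [mem_ball] at hyb
    have hε : 0 < r - dist y x := by linarith
    have hev : ∀ᶠ ρ in 𝓝[>] (0:ℝ),
        volume (W ∩ ball y ρ) / volume (ball y ρ) = 0 := by
      filter_upwards [Ioo_mem_nhdsGT_of_mem ⟨le_refl (0:ℝ), hε⟩] with ρ hρ
      have hsub : ball y ρ ⊆ ball x r := by
        apply ball_subset_ball'
        linarith [hρ.2]
      have : volume (W ∩ ball y ρ) = 0 := by
        refine measure_mono_null ?_ h0
        rintro z ⟨hz1, hz2⟩
        exact ⟨lt_trans hss hz1, hsub hz2⟩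
      rw [this, ENNReal.zero_div]
    have h0t : Tendsto (fun ρ : ℝ => volume (W ∩ ball y ρ) / volume (ball y ρ))
        (𝓝[>] 0) (𝓝 0) := Tendsto.congr' (EventuallyEq.symm hev) tendsto_const_nhds
    exact zero_ne_one (tendsto_nhds_unique h0t hyD)
  rw [mem_thickening_iff] at hx
  obtain ⟨z, hzf, hdz⟩ := hx
  have hzc : z ∈ closure D := hzf.1
  have hzb : z ∈ ball x r := by rw [mem_ball, dist_comm]; exact hdz
  rcases (_root_.mem_closure_iff.1 hzc) (ball x r) isOpen_ball hzb with ⟨w, hw1, hw2⟩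
  exact hBD w hw1 hw2

lemma claim2Q (n : ℕ) (r : ℝ) (hr : 0 < r)
    (u : EuclideanSpace ℝ (Fin n) → ℝ)
    (x : EuclideanSpace ℝ (Fin n)) (s s' : ℝ) (hss : s < s')
    (hx : x ∈ thickening r (frontier (densityOnePoints n {y | s < u y}))) :
    0 < volume ({y | u y < s'} ∩ ball x r) := by
  by_contra h0'
  have h0 : volume ({y | u y < s'} ∩ ball x r) = 0 := by simpa using h0'
  set W : Set (EuclideanSpace ℝ (Fin n)) := {y | s < u y} with hW
  set D := densityOnePoints n W with hD
  have hBD : ∀ y ∈ ball x r, y ∈ D := by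
    intro y hyb
    rw [mem_ball] at hyb
    have hε : 0 < r - dist y x := by linarith
    have hev : ∀ᶠ ρ in 𝓝[>] (0:ℝ),
        volume (W ∩ ball y ρ) / volume (ball y ρ) = 1 := by
      filter_upwards [Ioo_mem_nhdsGT_of_mem ⟨le_refl (0:ℝ), hε⟩] with ρ hρ
      have hsub : ball y ρ ⊆ ball x r := by
        apply ball_subset_ball'
        linarith [hρ.2]
      have hnull : volume (ball y ρ \ W) = 0 := by
        refine measure_mono_null ?_ h0
        rintro z ⟨hz1, hz2⟩
        have : u z ≤ s := not_lt.1 hz2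
        exact ⟨lt_of_le_of_lt this hss, hsub hz1⟩
      have heq : volume (W ∩ ball y ρ) = volume (ball y ρ) := by
        refine le_antisymm (measure_mono inter_subset_right) ?_
        calc volume (ball y ρ) ≤ volume (ball y ρ ∩ W) + volume (ball y ρ \ W) :=
              measure_le_inter_add_diff _ _ _
          _ = volume (W ∩ ball y ρ) := by rw [hnull, add_zero, inter_comm]
      rw [heq, ENNReal.div_self (measure_ball_pos volume y hρ.1).ne' measure_ball_lt_top.ne]
    exact Tendsto.congr' (EventuallyEq.symm hev) tendsto_const_nhds
  have hsub2 : ball x r ⊆ interior D := interior_maximal hBD isOpen_ball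
  rw [mem_thickening_iff] at hx
  obtain ⟨z, hzf, hdz⟩ := hx
  have hzb : z ∈ ball x r := by rw [mem_ball, dist_comm]; exact hdz
  exact hzf.2 (hsub2 hzb)

lemma sandwich_null (n : ℕ) (r : ℝ) (u : EuclideanSpace ℝ (Fin n) → ℝ)
    (x : EuclideanSpace ℝ (Fin n)) :
    volume ({s : ℝ | (∀ s' < s, 0 < volume ({y | s' < u y} ∩ ball x r)) ∧
        (∀ s', s < s' → 0 < volume ({y | u y < s'} ∩ ball x r))} \
      {s : ℝ | 0 < volume ({y | s < u y} ∩ ball x r) ∧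
        0 < volume ({y | u y < s} ∩ ball x r)}) = 0 := by
  set C := {s : ℝ | (∀ s' < s, 0 < volume ({y | s' < u y} ∩ ball x r)) ∧
      (∀ s', s < s' → 0 < volume ({y | u y < s'} ∩ ball x r))} with hC
  have hsub : C \ {s : ℝ | 0 < volume ({y | s < u y} ∩ ball x r) ∧
      0 < volume ({y | u y < s} ∩ ball x r)} ⊆
      (C \ {s : ℝ | 0 < volume ({y | s < u y} ∩ ball x r)}) ∪
      (C \ {s : ℝ | 0 < volume ({y | u y < s} ∩ ball x r)}) := by
    intro s hs
    by_cases hP : 0 < volume ({y | s < u y} ∩ ball x r)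
    · refine Or.inr ⟨hs.1, fun hQ => hs.2 ⟨hP, hQ⟩⟩
    · exact Or.inl ⟨hs.1, hP⟩
  have h1 : (C \ {s : ℝ | 0 < volume ({y | s < u y} ∩ ball x r)}).Subsingleton := by
    intro s hs t ht
    by_contra hne
    rcases lt_or_gt_of_ne hne with hlt | hlt
    · exact hs.2 (ht.1.1 s hlt)
    · exact ht.2 (hs.1.1 t hlt)
  have h2 : (C \ {s : ℝ | 0 < volume ({y | u y < s} ∩ ball x r)}).Subsingleton := by
    intro s hs t ht
    by_contra hne
    rcases lt_or_gt_of_ne hne with hlt | hlt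
    · exact ht.2 (hs.1.2 t hlt)
    · exact hs.2 (ht.1.2 s hlt)
  exact measure_mono_null hsub
    (measure_union_null (h1.measure_zero volume) (h2.measure_zero volume))


/-- Generalized coarea formula:
`∫_Ω osc_{B_r(x)} u dx = 2r ∫_ℝ Per_r({u > s}, Ω) ds` in `[0, ∞]`. -/
theorem generalized_coarea (n : ℕ) (hn : 1 ≤ n) (r : ℝ) (hr : 0 < r)
    (Ω : Set (EuclideanSpace ℝ (Fin n))) (hΩ : IsOpen Ω)
    (u : EuclideanSpace ℝ (Fin n) → ℝ) (hu : Measurable u)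
    (hloc : LocallyIntegrableOn u (Metric.thickening r Ω) volume) :
    ∫⁻ x in Ω, oscBall n r u x ∂volume =
      ENNReal.ofReal (2 * r) * ∫⁻ s : ℝ, perR n r {x | s < u x} Ω ∂volume := by
  have h2r0 : ENNReal.ofReal (2 * r) ≠ 0 := (ENNReal.ofReal_pos.2 (by linarith)).ne'
  have h2rtop : ENNReal.ofReal (2 * r) ≠ ⊤ := ENNReal.ofReal_ne_top
  set T : ℝ → Set (EuclideanSpace ℝ (Fin n)) :=
    fun s => thickening r (frontier (densityOnePoints n {y | s < u y})) with hT
  set F : EuclideanSpace ℝ (Fin n) → ℝ → ℝ≥0∞ :=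
    fun x s => (T s ∩ Ω).indicator (fun _ => (1:ℝ≥0∞)) x with hF
  set Isec : EuclideanSpace ℝ (Fin n) → Set ℝ :=
    fun x => {s : ℝ | 0 < volume ({y | s < u y} ∩ ball x r) ∧
      0 < volume ({y | u y < s} ∩ ball x r)} with hIsec
  -- RHS
  have hRHS : ENNReal.ofReal (2 * r) * ∫⁻ s : ℝ, perR n r {x | s < u x} Ω ∂volume
      = ∫⁻ s : ℝ, volume (T s ∩ Ω) ∂volume := by
    rw [← lintegral_const_mul' _ _ h2rtop]
    refine lintegral_congr fun s => ?_
    rw [perR, ENNReal.mul_div_cancel h2r0 h2rtop]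
  rw [hRHS]
  -- LHS
  have hosc : ∀ x, oscBall n r u x = volume (Isec x) := fun x => osc_eq n r hr u hu x
  -- pointwise identity for x ∈ Ω
  have hptwise : ∀ x, Ω.indicator (fun x => volume (Isec x)) x = ∫⁻ s, F x s ∂volume := by
    intro x
    by_cases hx : x ∈ Ω
    · rw [indicator_of_mem hx]
      have hind : volume (Isec x) = ∫⁻ s, (Isec x).indicator (fun _ => (1:ℝ≥0∞)) s ∂volume := by
        rw [lintegral_indicator (isOpen_Isec n r u x).measurableSet, setLIntegral_one]
      rw [hind]
      refine lintegral_congr_ae ?_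
      have hae : ∀ᵐ s : ℝ ∂volume, s ∉
          ({s : ℝ | (∀ s' < s, 0 < volume ({y | s' < u y} ∩ ball x r)) ∧
            (∀ s', s < s' → 0 < volume ({y | u y < s'} ∩ ball x r))} \ Isec x) := by
        rw [ae_iff]
        convert sandwich_null n r u x using 2
        ext s; simp only [mem_setOf_eq, not_not]; rfl
      filter_upwards [hae] with s hs
      by_cases hsI : s ∈ Isec x
      · rw [indicator_of_mem hsI]
        have hxT : x ∈ T s := claim1 n hn r hr u hu x s hsI.1 hsI.2
        rw [hF]
        simp only [indicator_of_mem (mem_inter hxT hx)]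
      · rw [indicator_of_notMem hsI]
        have hxT : x ∉ T s := by
          intro hxT
          exact hs ⟨⟨fun s' hs' => claim2P n r hr u x s s' hs' hxT,
            fun s' hs' => claim2Q n r hr u x s s' hs' hxT⟩, hsI⟩
        rw [hF]
        simp only [indicator_of_notMem (fun h : x ∈ T s ∩ Ω => hxT h.1)]
    · rw [indicator_of_notMem hx]
      symm
      have : ∀ s : ℝ, F x s = 0 := by
        intro s
        rw [hF]
        simp only [indicator_of_notMem (fun h : x ∈ T s ∩ Ω => hx h.2)]
      simp only [this, lintegral_zero]
  -- joint measurability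
  have hswap : ∫⁻ x, (∫⁻ s, F x s ∂volume) ∂volume = ∫⁻ s, (∫⁻ x, F x s ∂volume) ∂volume := by
    apply lintegral_lintegral_swap
    -- AEMeasurable of uncurry F
    set A := {p : EuclideanSpace ℝ (Fin n) × ℝ | p.1 ∈ T p.2 ∩ Ω} with hA
    set PP := {p : EuclideanSpace ℝ (Fin n) × ℝ | 0 < volume ({y | p.2 < u y} ∩ ball p.1 r)}
      with hPP
    set QQ := {p : EuclideanSpace ℝ (Fin n) × ℝ | 0 < volume ({y | u y < p.2} ∩ ball p.1 r)}
      with hQQ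
    have hPPm : MeasurableSet PP := by
      have : PP = ⋃ q : ℚ, ({p : EuclideanSpace ℝ (Fin n) × ℝ | p.2 < (q:ℝ)} ∩
          (Prod.fst ⁻¹' {x | 0 < volume ({y | ((q:ℚ):ℝ) < u y} ∩ ball x r)})) := by
        ext p
        simp only [hPP, mem_setOf_eq, mem_iUnion, mem_inter_iff, mem_preimage]
        exact ⟨fun h => by obtain ⟨q, h1, h2⟩ := (P_rat n r u p.1 p.2).1 h; exact ⟨q, h1, h2⟩,
          fun ⟨q, h1, h2⟩ => (P_rat n r u p.1 p.2).2 ⟨q, h1, h2⟩⟩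
      rw [this]
      refine MeasurableSet.iUnion fun q => (MeasurableSet.inter ?_ ?_)
      · exact measurable_snd measurableSet_Iio
      · exact measurable_fst (isOpen_posMeas n r _).measurableSet
    have hQQm : MeasurableSet QQ := by
      have : QQ = ⋃ q : ℚ, ({p : EuclideanSpace ℝ (Fin n) × ℝ | (q:ℝ) < p.2} ∩
          (Prod.fst ⁻¹' {x | 0 < volume ({y | u y < ((q:ℚ):ℝ)} ∩ ball x r)})) := by
        ext p
        simp only [hQQ, mem_setOf_eq, mem_iUnion, mem_inter_iff, mem_preimage]
        exact ⟨fun h => by obtain ⟨q, h1, h2⟩ := (Q_rat n r u p.1 p.2).1 h; exact ⟨q, h1, h2⟩,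
          fun ⟨q, h1, h2⟩ => (Q_rat n r u p.1 p.2).2 ⟨q, h1, h2⟩⟩
      rw [this]
      refine MeasurableSet.iUnion fun q => (MeasurableSet.inter ?_ ?_)
      · exact measurable_snd measurableSet_Ioi
      · exact measurable_fst (isOpen_posMeas n r _).measurableSet
    set A' := (Prod.fst ⁻¹' Ω) ∩ PP ∩ QQ with hA'
    have hA'm : MeasurableSet A' :=
      ((measurable_fst hΩ.measurableSet).inter hPPm).inter hQQm
    set C := {p : EuclideanSpace ℝ (Fin n) × ℝ |
        (∀ s' < p.2, 0 < volume ({y | s' < u y} ∩ ball p.1 r)) ∧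
        (∀ s', p.2 < s' → 0 < volume ({y | u y < s'} ∩ ball p.1 r))} with hC
    have hCm : MeasurableSet C := by
      have : C = ⋂ q : ℚ,
          (({p : EuclideanSpace ℝ (Fin n) × ℝ | (q:ℝ) < p.2} ∩
            (Prod.fst ⁻¹' {x | 0 < volume ({y | ((q:ℚ):ℝ) < u y} ∩ ball x r)})ᶜ)ᶜ ∩
          ({p : EuclideanSpace ℝ (Fin n) × ℝ | p.2 < (q:ℝ)} ∩
            (Prod.fst ⁻¹' {x | 0 < volume ({y | u y < ((q:ℚ):ℝ)} ∩ ball x r)})ᶜ)ᶜ) := by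
        ext p
        simp only [hC, mem_setOf_eq, mem_iInter, mem_inter_iff, mem_compl_iff, mem_preimage,
          not_and, not_not]
        constructor
        · intro ⟨h1, h2⟩ q
          exact ⟨fun hq => h1 _ hq, fun hq => h2 _ hq⟩
        · intro h
          constructor
          · intro s' hs'
            obtain ⟨q, hq1, hq2⟩ := exists_rat_btwn hs'
            exact P_anti n r u p.1 (le_of_lt hq1) ((h q).1 hq2)
          · intro s' hs'
            obtain ⟨q, hq1, hq2⟩ := exists_rat_btwn hs'
            exact Q_mono n r u p.1 (le_of_lt hq2) ((h q).2 hq1)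
      rw [this]
      refine MeasurableSet.iInter fun q => MeasurableSet.inter ?_ ?_
      · exact ((measurable_snd measurableSet_Ioi).inter
          ((measurable_fst (isOpen_posMeas n r _).measurableSet).compl)).compl
      · exact ((measurable_snd measurableSet_Iio).inter
          ((measurable_fst (isOpen_posMeas n r _).measurableSet).compl)).compl
    set D := C \ (PP ∩ QQ) with hD
    have hDm : MeasurableSet D := hCm.diff (hPPm.inter hQQm)
    have hDnull : (volume.prod volume) D = 0 := by
      rw [Measure.measure_prod_null hDm]
      refine Filter.Eventually.of_forall fun x => ?_
      show volume (Prod.mk x ⁻¹' D) = 0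
      have : Prod.mk x ⁻¹' D =
          ({s : ℝ | (∀ s' < s, 0 < volume ({y | s' < u y} ∩ ball x r)) ∧
            (∀ s', s < s' → 0 < volume ({y | u y < s'} ∩ ball x r))} \
          {s : ℝ | 0 < volume ({y | s < u y} ∩ ball x r) ∧
            0 < volume ({y | u y < s} ∩ ball x r)}) := by
        ext s
        simp only [hD, hC, hPP, hQQ, mem_preimage, mem_diff, mem_setOf_eq, mem_inter_iff]
      rw [this]
      exact sandwich_null n r u x
    have haeD : ∀ᵐ p ∂(volume.prod volume : Measure (EuclideanSpace ℝ (Fin n) × ℝ)),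
        p ∉ D := by
      rw [ae_iff]
      convert hDnull using 2
      ext p; simp only [mem_setOf_eq, not_not]
    refine (((measurable_const : Measurable fun _ : EuclideanSpace ℝ (Fin n) × ℝ => (1:ℝ≥0∞)).indicator hA'm).aemeasurable).congr ?_
    filter_upwards [haeD] with p hpD
    have hiff : p ∈ A' ↔ p.1 ∈ T p.2 ∩ Ω := by
      constructor
      · rintro ⟨⟨hΩ1, hPp⟩, hQp⟩
        exact ⟨claim1 n hn r hr u hu p.1 p.2 hPp hQp, hΩ1⟩
      · rintro ⟨hTp, hΩ1⟩
        have hpC : p ∈ C := ⟨fun s' hs' => claim2P n r hr u p.1 p.2 s' hs' hTp,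
          fun s' hs' => claim2Q n r hr u p.1 p.2 s' hs' hTp⟩
        have hPQ : p ∈ PP ∩ QQ := by
          by_contra hc
          exact hpD ⟨hpC, hc⟩
        exact ⟨⟨hΩ1, hPQ.1⟩, hPQ.2⟩
    show A'.indicator (fun _ => (1:ℝ≥0∞)) p = Function.uncurry F p
    have : Function.uncurry F p = (T p.2 ∩ Ω).indicator (fun _ => (1:ℝ≥0∞)) p.1 := rfl
    rw [this]
    by_cases hp : p ∈ A'
    · rw [indicator_of_mem hp, indicator_of_mem (hiff.1 hp)]
    · rw [indicator_of_notMem hp, indicator_of_notMem (fun h => hp (hiff.2 h))]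
  -- assemble
  calc ∫⁻ x in Ω, oscBall n r u x ∂volume
      = ∫⁻ x in Ω, volume (Isec x) ∂volume := lintegral_congr fun x => hosc x
    _ = ∫⁻ x, Ω.indicator (fun x => volume (Isec x)) x ∂volume := by
        rw [lintegral_indicator hΩ.measurableSet]
    _ = ∫⁻ x, (∫⁻ s, F x s ∂volume) ∂volume := lintegral_congr fun x => hptwise x
    _ = ∫⁻ s, (∫⁻ x, F x s ∂volume) ∂volume := hswap
    _ = ∫⁻ s : ℝ, volume (T s ∩ Ω) ∂volume := by
        refine lintegral_congr fun s => ?_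
        rw [hF]
        rw [lintegral_indicator ((isOpen_thickening.inter hΩ).measurableSet), setLIntegral_one]
end
end

section
/- Pointwise convergence of the r-perimeters: let Ω ⊆ ℝⁿ be either open and bounded or equal to ℝⁿ, let r ∈ (0, ∞) and let (r_k) be a sequence of positive reals with r_k → r. Then for every measurable set E ⊆ ℝⁿ, Per_{r_k}(E, Ω) → Per_r(E, Ω) as k → ∞ (as a limit in [0, ∞]). -/
open MeasureTheory Metric Set Filter Topology
open scoped RealInnerProductSpace ENNReal

noncomputable section

/-- The level set `{x | infDist x F = r}` of the distance function to a nonempty closed set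
is Lebesgue-null for `r > 0`, since it is porous. -/
theorem levelset_null (n : ℕ) {F : Set (EuclideanSpace ℝ (Fin n))} (hFc : IsClosed F)
    (hne : F.Nonempty) {r : ℝ} (hr : 0 < r) :
    volume {x : EuclideanSpace ℝ (Fin n) | Metric.infDist x F = r} = 0 := by
  set S := {x : EuclideanSpace ℝ (Fin n) | Metric.infDist x F = r} with hS
  have hSm : MeasurableSet S := measurable_infDist (measurableSet_singleton r)
  have B0 : (0 : ℝ≥0∞) < volume (ball (0 : EuclideanSpace ℝ (Fin n)) 1) :=
    measure_ball_pos _ _ one_pos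
  set c : ℝ≥0∞ := ENNReal.ofReal ((4 : ℝ)⁻¹ ^ n) with hc
  have hc0 : 0 < c := ENNReal.ofReal_pos.2 (by positivity)
  have key : ∀ x ∈ S, ∀ ρ : ℝ, 0 < ρ → ρ ≤ 2 * r →
      volume (S ∩ closedBall x ρ) / volume (closedBall x ρ) ≤ 1 - c := by
    intro x hx ρ hρ hρr
    set t := ρ / 2 with ht
    have ht0 : 0 < t := by positivity
    have htr : t ≤ r := by simp only [ht]; linarith
    obtain ⟨y, hyF, hxy⟩ := hFc.exists_infDist_eq_dist hne x
    have hdxy : dist x y = r := by rw [← hxy]; exact hx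
    set z := x + (t / r) • (y - x) with hz
    have hzx : dist z x = t := by
      rw [dist_eq_norm, hz, add_sub_cancel_left, norm_smul, Real.norm_eq_abs,
        abs_of_nonneg (by positivity)]
      have hn : ‖y - x‖ = r := by rw [← hdxy, dist_eq_norm, norm_sub_rev]
      rw [hn]; field_simp
    have hzy : dist z y = r - t := by
      have hzy' : z - y = (1 - t / r) • (x - y) := by rw [hz]; module
      have hn : ‖x - y‖ = r := by rw [← hdxy, dist_eq_norm]
      rw [dist_eq_norm, hzy', norm_smul, Real.norm_eq_abs,
        abs_of_nonneg (by rw [sub_nonneg]; exact div_le_one_of_le₀ htr hr.le), hn]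
      field_simp
    have hdisj : ∀ w ∈ ball z (t / 2), w ∉ S := by
      intro w hw hwS
      have h1 : Metric.infDist w F ≤ dist w y := Metric.infDist_le_dist_of_mem hyF
      have h2 : dist w y ≤ dist w z + dist z y := dist_triangle _ _ _
      have h3 : dist w z < t / 2 := mem_ball.1 hw
      have : Metric.infDist w F < r := by rw [hzy] at h2; linarith
      exact absurd hwS (by simp only [hS, mem_setOf_eq]; linarith)
    have hsub : ball z (t / 2) ⊆ closedBall x ρ := by
      intro w hw
      have h2 : dist w x ≤ dist w z + dist z x := dist_triangle _ _ _
      have h3 : dist w z < t / 2 := mem_ball.1 hw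
      rw [mem_closedBall]
      rw [hzx] at h2
      simp only [ht] at h3 ⊢
      linarith
    have hvol_ball : volume (ball z (t / 2)) = c * volume (closedBall x ρ) := by
      rw [Measure.addHaar_closedBall volume x hρ.le,
        Measure.addHaar_ball_of_pos volume z (by positivity : (0 : ℝ) < t / 2),
        finrank_euclideanSpace_fin, hc, ← mul_assoc, ← ENNReal.ofReal_mul (by positivity),
        ← mul_pow]
      congr 3
      simp only [ht]; ring
    have hdisj2 : Disjoint (S ∩ closedBall x ρ) (ball z (t / 2)) := by
      rw [Set.disjoint_left]
      intro w hw hw'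
      exact hdisj w hw' hw.1
    have hcb0 : volume (closedBall x ρ) ≠ 0 :=
      ((measure_ball_pos _ _ hρ).trans_le (measure_mono ball_subset_closedBall)).ne'
    have hcbtop : volume (closedBall x ρ) ≠ ⊤ := measure_closedBall_lt_top.ne
    have hle : volume (S ∩ closedBall x ρ) + c * volume (closedBall x ρ)
        ≤ volume (closedBall x ρ) := by
      rw [← hvol_ball, ← measure_union hdisj2 measurableSet_ball]
      exact measure_mono (union_subset inter_subset_right hsub)
    have hmain : volume (S ∩ closedBall x ρ) / volume (closedBall x ρ) + c ≤ 1 := by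
      calc volume (S ∩ closedBall x ρ) / volume (closedBall x ρ) + c
          = (volume (S ∩ closedBall x ρ) + c * volume (closedBall x ρ))
              / volume (closedBall x ρ) := by
            rw [ENNReal.add_div, mul_div_assoc, ENNReal.div_self hcb0 hcbtop, mul_one]
        _ ≤ volume (closedBall x ρ) / volume (closedBall x ρ) :=
            ENNReal.div_le_div_right hle _
        _ = 1 := ENNReal.div_self hcb0 hcbtop
    exact ENNReal.le_sub_of_add_le_right ENNReal.ofReal_ne_top hmain
  have hae := Besicovitch.ae_tendsto_measure_inter_div volume S
  have hfalse : ∀ᵐ x ∂(volume.restrict S), False := by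
    filter_upwards [hae, ae_restrict_mem hSm] with x hT hxS
    have h1c : (1 : ℝ≥0∞) - c < 1 :=
      ENNReal.sub_lt_self ENNReal.one_ne_top one_ne_zero hc0.ne'
    have hev := hT.eventually (eventually_gt_nhds h1c)
    have hIoc : Ioc (0 : ℝ) (2 * r) ∈ 𝓝[>] (0 : ℝ) :=
      Ioc_mem_nhdsGT_of_mem ⟨le_rfl, by positivity⟩
    obtain ⟨ρ, h1, h2⟩ := (hev.and (eventually_of_mem hIoc fun ρ h => h)).exists
    exact absurd (key x hxS ρ h2.1 h2.2) (not_le.2 h1)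
  have h0 : volume.restrict S Set.univ = 0 := by simpa using ae_iff.mp hfalse
  rwa [Measure.restrict_apply_univ] at h0

/-- If an open `r`-neighbourhood of `F` has finite volume, so does the `2r`-neighbourhood. -/
theorem thickening_two_finite (n : ℕ) {F : Set (EuclideanSpace ℝ (Fin n))} (hne : F.Nonempty)
    {r : ℝ} (hr : 0 < r) (hfin : volume (Metric.thickening r F) ≠ ⊤) :
    volume (Metric.thickening (2 * r) F) ≠ ⊤ := by
  obtain ⟨u, huF, hdisj, hcov⟩ := Vitali.exists_disjoint_subfamily_covering_enlargement_closedBall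
    F id (fun _ => 2 * r) (2 * r) (fun a _ => le_rfl) 4 (by norm_num)
  have hdisjball : u.PairwiseDisjoint fun b => ball b (2 * r) :=
    hdisj.mono_on fun b _ => ball_subset_closedBall
  have hucount : u.Countable :=
    hdisjball.countable_of_isOpen (fun b _ => isOpen_ball)
      (fun b _ => nonempty_ball.2 (by positivity))
  have hdisj' : u.PairwiseDisjoint fun b => ball b r :=
    hdisjball.mono_on fun b _ => ball_subset_ball (by linarith)
  have hcover : Metric.thickening (2 * r) F ⊆ ⋃ b ∈ u, closedBall b (8 * r) := by
    intro w hw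
    obtain ⟨y, hyF, hwy⟩ := Metric.mem_thickening_iff.1 hw
    obtain ⟨b, hbu, hsub⟩ := hcov y hyF
    have : w ∈ closedBall (id b) (4 * (2 * r)) := hsub (mem_closedBall.2 hwy.le)
    refine mem_biUnion hbu ?_
    simpa [show (4 : ℝ) * (2 * r) = 8 * r by ring] using this
  have hball_eq : ∀ b ∈ u, volume (closedBall b (8 * r))
      = ENNReal.ofReal ((8 : ℝ) ^ n) * volume (ball b r) := by
    intro b _
    rw [Measure.addHaar_closedBall volume b (by positivity : (0 : ℝ) ≤ 8 * r),
      Measure.addHaar_ball_of_pos volume b hr, finrank_euclideanSpace_fin, ← mul_assoc,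
      ← ENNReal.ofReal_mul (by positivity), ← mul_pow]
  have hcalc : volume (Metric.thickening (2 * r) F)
      ≤ ENNReal.ofReal ((8 : ℝ) ^ n) * volume (Metric.thickening r F) := by
    calc volume (Metric.thickening (2 * r) F)
        ≤ volume (⋃ b ∈ u, closedBall b (8 * r)) := measure_mono hcover
      _ ≤ ∑' b : u, volume (closedBall (b : EuclideanSpace ℝ (Fin n)) (8 * r)) :=
          measure_biUnion_le volume hucount _
      _ = ∑' b : u, ENNReal.ofReal ((8 : ℝ) ^ n)
            * volume (ball (b : EuclideanSpace ℝ (Fin n)) r) :=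
          tsum_congr fun b => hball_eq b b.2
      _ = ENNReal.ofReal ((8 : ℝ) ^ n)
            * ∑' b : u, volume (ball (b : EuclideanSpace ℝ (Fin n)) r) :=
          ENNReal.tsum_mul_left
      _ = ENNReal.ofReal ((8 : ℝ) ^ n) * volume (⋃ b ∈ u, ball b r) := by
          rw [measure_biUnion hucount hdisj' fun b _ => measurableSet_ball]
      _ ≤ ENNReal.ofReal ((8 : ℝ) ^ n) * volume (Metric.thickening r F) := by
          gcongr
          exact iUnion₂_subset fun b hb => Metric.ball_subset_thickening (huF hb) r
  exact ne_top_of_le_ne_top (ENNReal.mul_ne_top ENNReal.ofReal_ne_top hfin) hcalc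

/-- Pointwise convergence of the `r`-perimeters: if `Ω` is open and bounded, or `Ω = ℝⁿ`, and
`r_k → r > 0` with `r_k > 0`, then `Per_{r_k}(E, Ω) → Per_r(E, Ω)` in `[0, ∞]`
for every measurable `E`. -/
theorem perR_tendsto (n : ℕ) (Ω : Set (EuclideanSpace ℝ (Fin n)))
    (hΩ : (IsOpen Ω ∧ Bornology.IsBounded Ω) ∨ Ω = Set.univ)
    (r : ℝ) (hr : 0 < r) (rk : ℕ → ℝ) (hrk : ∀ k, 0 < rk k)
    (hlim : Tendsto rk atTop (𝓝 r))
    (E : Set (EuclideanSpace ℝ (Fin n))) (hE : MeasurableSet E) :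
    Tendsto (fun k => perR n (rk k) E Ω) atTop (𝓝 (perR n r E Ω)) := by
  set F := frontier (densityOnePoints n E) with hF
  have hFc : IsClosed F := isClosed_frontier
  rcases F.eq_empty_or_nonempty with hFe | hFne
  · simp only [perR, ← hF, hFe, Metric.thickening_empty, Set.empty_inter, measure_empty,
      ENNReal.zero_div]
    exact tendsto_const_nhds
  have hΩm : MeasurableSet Ω := by
    rcases hΩ with ⟨ho, _⟩ | rfl
    · exact ho.measurableSet
    · exact MeasurableSet.univ
  -- the numerator converges
  have hnum : Tendsto (fun k => volume (Metric.thickening (rk k) F ∩ Ω)) atTop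
      (𝓝 (volume (Metric.thickening r F ∩ Ω))) := by
    rw [tendsto_order]
    constructor
    · -- lower bound, via continuity from below
      intro a ha
      set s : ℕ → ℝ := fun m => r - r / (m + 2) with hs
      have hslt : ∀ m, s m < r := fun m => by
        have : 0 < r / (m + 2) := by positivity
        simp only [hs]; linarith
      have hstend : Tendsto s atTop (𝓝 r) := by
        have h1 : Tendsto (fun m : ℕ => r / ((m : ℝ) + 2)) atTop (𝓝 0) := by
          have := (tendsto_const_div_atTop_nhds_zero_nat r).comp (tendsto_add_atTop_nat 2)
          simpa [Function.comp_def, Nat.cast_add] using this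
        simpa using tendsto_const_nhds.sub h1
      have hsmono : Monotone fun m => Metric.thickening (s m) F ∩ Ω := by
        intro m m' hmm'
        refine inter_subset_inter_left _ (Metric.thickening_mono ?_ _)
        have : (m : ℝ) + 2 ≤ (m' : ℝ) + 2 := by
          have := (Nat.cast_le (α := ℝ)).2 hmm'; linarith
        simp only [hs]
        have h2 : r / ((m' : ℝ) + 2) ≤ r / ((m : ℝ) + 2) :=
          div_le_div_of_nonneg_left hr.le (by positivity) this
        linarith
      have hUnion : ⋃ m, (Metric.thickening (s m) F ∩ Ω) = Metric.thickening r F ∩ Ω := by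
        ext x
        simp only [mem_iUnion, mem_inter_iff]
        constructor
        · rintro ⟨m, hx1, hx2⟩
          exact ⟨Metric.thickening_mono (hslt m).le _ hx1, hx2⟩
        · rintro ⟨hx1, hx2⟩
          have hlt : EMetric.infEdist x F < ENNReal.ofReal r :=
            Metric.mem_thickening_iff_infEdist_lt.1 hx1
          have : ∀ᶠ m in atTop, EMetric.infEdist x F < ENNReal.ofReal (s m) :=
            (ENNReal.tendsto_ofReal hstend).eventually (eventually_gt_nhds hlt)
          obtain ⟨m, hm⟩ := this.exists
          exact ⟨m, Metric.mem_thickening_iff_infEdist_lt.2 hm, hx2⟩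
      have htend := tendsto_measure_iUnion_atTop (μ := volume) hsmono
      rw [hUnion] at htend
      have := htend.eventually (eventually_gt_nhds ha)
      obtain ⟨m, hm⟩ := this.exists
      have hev : ∀ᶠ k in atTop, s m < rk k := hlim.eventually (eventually_gt_nhds (hslt m))
      filter_upwards [hev] with k hk
      exact hm.trans_le (measure_mono (inter_subset_inter_left _
        (Metric.thickening_mono hk.le _)))
    · -- upper bound, via continuity from above
      intro a ha
      set s : ℕ → ℝ := fun m => r + r / (m + 1) with hs
      have hsgt : ∀ m, r < s m := fun m => by
        have : 0 < r / (m + 1) := by positivity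
        simp only [hs]; linarith
      have hsle : ∀ m, s m ≤ 2 * r := fun m => by
        have h1 : r / ((m : ℝ) + 1) ≤ r / 1 := div_le_div_of_nonneg_left hr.le one_pos
          (by exact_mod_cast Nat.le_add_left 1 m)
        simp only [hs]; rw [div_one] at h1; linarith
      have hstend : Tendsto s atTop (𝓝 r) := by
        have h1 : Tendsto (fun m : ℕ => r / ((m : ℝ) + 1)) atTop (𝓝 0) := by
          have := (tendsto_const_div_atTop_nhds_zero_nat r).comp (tendsto_add_atTop_nat 1)
          simpa [Function.comp_def, Nat.cast_add] using this
        simpa using tendsto_const_nhds.add h1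
      have hsanti : Antitone fun m => Metric.thickening (s m) F ∩ Ω := by
        intro m m' hmm'
        refine inter_subset_inter_left _ (Metric.thickening_mono ?_ _)
        have : (m : ℝ) + 1 ≤ (m' : ℝ) + 1 := by
          have := (Nat.cast_le (α := ℝ)).2 hmm'; linarith
        simp only [hs]
        have h2 : r / ((m' : ℝ) + 1) ≤ r / ((m : ℝ) + 1) :=
          div_le_div_of_nonneg_left hr.le (by positivity) this
        linarith
      have hfin : volume (Metric.thickening (s 0) F ∩ Ω) ≠ ⊤ := by
        rcases hΩ with ⟨_, hb⟩ | rfl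
        · exact ne_top_of_le_ne_top hb.measure_lt_top.ne (measure_mono inter_subset_right)
        · have h1 : volume (Metric.thickening r F) ≠ ⊤ := by
            rw [inter_univ] at ha
            exact ha.ne_top
          have h2 := thickening_two_finite n hFne hr h1
          exact ne_top_of_le_ne_top h2 (measure_mono
            (by rw [inter_univ]; exact Metric.thickening_mono (hsle 0) _))
      have hInter : ⋂ m, (Metric.thickening (s m) F ∩ Ω)
          = Metric.cthickening r F ∩ Ω := by
        ext x
        simp only [mem_iInter, mem_inter_iff]
        constructor
        · intro h
          refine ⟨Metric.mem_cthickening_iff.2 ?_, (h 0).2⟩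
          refine ge_of_tendsto' (ENNReal.tendsto_ofReal hstend) fun m => ?_
          exact (Metric.mem_thickening_iff_infEdist_lt.1 (h m).1).le
        · rintro ⟨hx1, hx2⟩ m
          refine ⟨Metric.mem_thickening_iff_infEdist_lt.2 ?_, hx2⟩
          calc EMetric.infEdist x F ≤ ENNReal.ofReal r := Metric.mem_cthickening_iff.1 hx1
            _ < ENNReal.ofReal (s m) := by
                rw [ENNReal.ofReal_lt_ofReal_iff (hr.trans (hsgt m))]
                exact hsgt m
      have htend := tendsto_measure_iInter_atTop (μ := volume)
        (fun m => (Metric.isOpen_thickening.measurableSet.inter hΩm).nullMeasurableSet)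
        hsanti ⟨0, hfin⟩
      rw [hInter] at htend
      have hkey : volume (Metric.cthickening r F ∩ Ω)
          = volume (Metric.thickening r F ∩ Ω) := by
        refine le_antisymm ?_ (measure_mono (inter_subset_inter_left _
          (Metric.thickening_subset_cthickening _ _)))
        have hsubset : Metric.cthickening r F ∩ Ω ⊆
            (Metric.thickening r F ∩ Ω) ∪ {x | Metric.infDist x F = r} := by
          rintro x ⟨hx1, hx2⟩
          by_cases hx3 : x ∈ Metric.thickening r F
          · exact Or.inl ⟨hx3, hx2⟩
          · refine Or.inr ?_
            have h1 : EMetric.infEdist x F ≤ ENNReal.ofReal r :=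
              Metric.mem_cthickening_iff.1 hx1
            have h2 : ¬ EMetric.infEdist x F < ENNReal.ofReal r := fun h =>
              hx3 (Metric.mem_thickening_iff_infEdist_lt.2 h)
            have h3 : EMetric.infEdist x F = ENNReal.ofReal r := le_antisymm h1 (not_lt.1 h2)
            show Metric.infDist x F = r
            rw [Metric.infDist]; change (EMetric.infEdist x F).toReal = r
            rw [h3, ENNReal.toReal_ofReal hr.le]
        calc volume (Metric.cthickening r F ∩ Ω)
            ≤ volume ((Metric.thickening r F ∩ Ω) ∪ {x | Metric.infDist x F = r}) :=
              measure_mono hsubset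
          _ ≤ volume (Metric.thickening r F ∩ Ω) + volume {x | Metric.infDist x F = r} :=
              measure_union_le _ _
          _ = volume (Metric.thickening r F ∩ Ω) := by
              rw [levelset_null n hFc hFne hr, add_zero]
      rw [hkey] at htend
      obtain ⟨m, hm⟩ := (htend.eventually (eventually_lt_nhds ha)).exists
      have hev : ∀ᶠ k in atTop, rk k < s m := hlim.eventually (eventually_lt_nhds (hsgt m))
      filter_upwards [hev] with k hk
      exact lt_of_le_of_lt (measure_mono (inter_subset_inter_left _
        (Metric.thickening_mono hk.le _))) hm
  have hden : Tendsto (fun k => ENNReal.ofReal (2 * rk k)) atTop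
      (𝓝 (ENNReal.ofReal (2 * r))) :=
    ENNReal.tendsto_ofReal (tendsto_const_nhds.mul hlim)
  have h2r0 : ENNReal.ofReal (2 * r) ≠ 0 := (ENNReal.ofReal_pos.2 (by positivity)).ne'
  exact ENNReal.Tendsto.div hnum (Or.inr h2r0) hden (Or.inl ENNReal.ofReal_ne_top)
end
end

section
/- Pathological behaviour on unbounded domains: let n ≥ 2, r > 0, Ω := {x ∈ ℝⁿ : x_n > 0} and E := {x ∈ ℝⁿ : x_n < −r}. Then Per_r(E, Ω) = 0, while Per_s(E, Ω) = +∞ for every s > r. -/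
open MeasureTheory Metric Set Filter Topology
open scoped RealInnerProductSpace ENNReal

noncomputable section

namespace PathologicalAux

variable {n : ℕ}

lemma coord_dist (i : Fin n) (x y : EuclideanSpace ℝ (Fin n)) : |x i - y i| ≤ dist x y := by
  rw [EuclideanSpace.dist_eq]
  have h1 : |x i - y i| = Real.sqrt (dist (x i) (y i) ^ 2) := by
    rw [Real.sqrt_sq dist_nonneg, Real.dist_eq]
  rw [h1]
  exact Real.sqrt_le_sqrt (Finset.single_le_sum (f := fun j => dist (x j) (y j) ^ 2)
    (fun j _ => sq_nonneg _) (Finset.mem_univ i))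

lemma mem_dop {E : Set (EuclideanSpace ℝ (Fin n))} {x} {ε : ℝ}
    (hε : 0 < ε) (h : ball x ε ⊆ E) : x ∈ densityOnePoints n E := by
  have he : ∀ᶠ ρ in 𝓝[>] (0:ℝ),
      (1:ℝ≥0∞) = volume (E ∩ ball x ρ) / volume (ball x ρ) := by
    filter_upwards [Ioo_mem_nhdsGT_of_mem ⟨le_refl 0, hε⟩] with ρ hρ
    rw [inter_eq_self_of_subset_right ((ball_subset_ball hρ.2.le).trans h)]
    exact (ENNReal.div_self (measure_ball_pos volume x hρ.1).ne' measure_ball_lt_top.ne).symm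
  exact tendsto_const_nhds.congr' he

lemma not_mem_dop {E : Set (EuclideanSpace ℝ (Fin n))} {x} {ε : ℝ}
    (hε : 0 < ε) (h : ball x ε ∩ E = ∅) : x ∉ densityOnePoints n E := by
  intro hx
  have he : ∀ᶠ ρ in 𝓝[>] (0:ℝ),
      (0:ℝ≥0∞) = volume (E ∩ ball x ρ) / volume (ball x ρ) := by
    filter_upwards [Ioo_mem_nhdsGT_of_mem ⟨le_refl 0, hε⟩] with ρ hρ
    have hsub : E ∩ ball x ρ ⊆ ball x ε ∩ E :=
      fun y hy => ⟨ball_subset_ball hρ.2.le hy.2, hy.1⟩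
    rw [h] at hsub
    rw [Set.subset_empty_iff.mp hsub]
    simp
  have h0 : Tendsto (fun ρ : ℝ => volume (E ∩ ball x ρ) / volume (ball x ρ)) (𝓝[>] 0) (𝓝 0) :=
    tendsto_const_nhds.congr' he
  exact zero_ne_one (tendsto_nhds_unique h0 hx)

/-- The frontier of the density-one points of the half-space `{x i < -r}` is the
hyperplane `{x i = -r}`. -/
lemma frontier_dop (i : Fin n) (r : ℝ) :
    frontier (densityOnePoints n {x : EuclideanSpace ℝ (Fin n) | x i < -r})
      = {x : EuclideanSpace ℝ (Fin n) | x i = -r} := by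
  set E : Set (EuclideanSpace ℝ (Fin n)) := {x | x i < -r} with hE
  set D := densityOnePoints n E with hD
  set f : EuclideanSpace ℝ (Fin n) →L[ℝ] ℝ := EuclideanSpace.proj i with hf
  have hfa : ∀ x : EuclideanSpace ℝ (Fin n), f x = x i := fun x => rfl
  have hfne : f ≠ 0 := by
    intro h
    have := congrArg (fun g : EuclideanSpace ℝ (Fin n) →L[ℝ] ℝ =>
      g (EuclideanSpace.single i 1)) h
    simp [hfa, EuclideanSpace.single_apply] at this
  have hopen : IsOpenMap f := f.isOpenMap_of_ne_zero hfne
  have hEeq : E = f ⁻¹' Iio (-r) := rfl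
  have hCeq : {x : EuclideanSpace ℝ (Fin n) | x i ≤ -r} = f ⁻¹' Iic (-r) := rfl
  have hEopen : IsOpen E := hEeq ▸ isOpen_Iio.preimage f.continuous
  -- closure of E is the closed half-space
  have hclosE : closure E = f ⁻¹' Iic (-r) := by
    rw [hEeq, ← hopen.preimage_closure_eq_closure_preimage f.continuous, closure_Iio]
  have hintC : interior (f ⁻¹' Iic (-r)) = E := by
    rw [hEeq, ← hopen.preimage_interior_eq_interior_preimage f.continuous, interior_Iic]
  -- E ⊆ D
  have hED : E ⊆ D := by
    intro x hx
    refine mem_dop (ε := -r - x i) (by have hx' : x i < -r := hx; linarith) ?_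
    intro y hy
    have h1 : |y i - x i| ≤ dist y x := coord_dist i y x
    have h2 : dist y x < -r - x i := hy
    have : y i - x i < -r - x i := lt_of_le_of_lt (le_abs_self _) (h1.trans_lt h2)
    simpa [E] using by linarith
  -- D ⊆ closed half-space
  have hDC : D ⊆ f ⁻¹' Iic (-r) := by
    intro x hx
    by_contra hxc
    have hxi : -r < x i := by simpa [hfa, not_le] using hxc
    refine not_mem_dop (ε := x i + r) (by linarith) ?_ hx
    ext y
    simp only [Set.mem_inter_iff, mem_ball, Set.mem_empty_iff_false, iff_false, not_and]
    intro hy hyE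
    have h1 : |y i - x i| ≤ dist y x := coord_dist i y x
    have h2 : x i - y i ≤ |y i - x i| := by rw [abs_sub_comm]; exact le_abs_self _
    have hyE' : y i < -r := hyE
    linarith [h1.trans_lt hy]
  have hclD : closure D = f ⁻¹' Iic (-r) := by
    refine subset_antisymm (closure_minimal hDC (isClosed_Iic.preimage f.continuous)) ?_
    rw [← hclosE]
    exact closure_mono hED
  have hintD : interior D = E := by
    refine subset_antisymm ?_ (interior_maximal hED hEopen)
    rw [← hintC]
    exact interior_mono hDC
  rw [frontier, hclD, hintD]
  ext x
  simp only [Set.mem_diff, Set.mem_preimage, mem_Iic, hfa, Set.mem_setOf_eq, hE]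
  constructor
  · rintro ⟨h1, h2⟩; exact le_antisymm h1 (not_lt.mp h2)
  · rintro h; exact ⟨le_of_eq h, by simp [h]⟩

/-- The slab has infinite volume when `n ≥ 2`. -/
lemma volume_slab (hn : 2 ≤ n) (i : Fin n) {c : ℝ} (hc : 0 < c) :
    volume {x : EuclideanSpace ℝ (Fin n) | 0 < x i ∧ x i < c} = ⊤ := by
  have hp := (EuclideanSpace.volume_preserving_symm_measurableEquiv_toLp (Fin n)).symm
  have hcont : Continuous fun x : EuclideanSpace ℝ (Fin n) => x i := by
    exact (continuous_apply i).comp (PiLp.continuousLinearEquiv 2 ℝ _).continuous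
  have hmeas : MeasurableSet {x : EuclideanSpace ℝ (Fin n) | 0 < x i ∧ x i < c} :=
    ((isOpen_lt continuous_const hcont).inter (isOpen_lt hcont continuous_const)).measurableSet
  rw [← hp.measure_preimage hmeas.nullMeasurableSet]
  have hpre : (MeasurableEquiv.toLp 2 (Fin n → ℝ)).symm.symm ⁻¹'
      {x : EuclideanSpace ℝ (Fin n) | 0 < x i ∧ x i < c}
      = Set.pi Set.univ (fun j => if j = i then Ioo (0:ℝ) c else univ) := by
    have happ : ∀ (f : Fin n → ℝ) (j : Fin n),
        (MeasurableEquiv.toLp 2 (Fin n → ℝ)).symm.symm f j = f j := fun _ _ => rfl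
    ext f
    simp only [Set.mem_preimage, Set.mem_setOf_eq, Set.mem_pi, Set.mem_univ, forall_true_left,
      happ]
    constructor
    · rintro ⟨h1, h2⟩ j
      by_cases hj : j = i
      · subst hj; simp [h1, h2]
      · simp [hj]
    · intro h
      have := h i
      simpa using this
  rw [hpre, volume_pi_pi]
  rw [← Finset.mul_prod_erase Finset.univ _ (Finset.mem_univ i)]
  simp only [if_pos rfl]
  have hrest : ∀ j ∈ Finset.univ.erase i,
      volume (if j = i then Ioo (0:ℝ) c else univ) = ⊤ := by
    intro j hj
    rw [if_neg (Finset.ne_of_mem_erase hj)]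
    simp
  rw [Finset.prod_congr rfl hrest, Finset.prod_const]
  have hcard : (Finset.univ.erase i).card = n - 1 := by
    simp [Finset.card_erase_of_mem]
  rw [hcard, ENNReal.top_pow (by omega), ENNReal.mul_top]
  simp [Real.volume_Ioo, hc]

end PathologicalAux

open PathologicalAux

/-- Pathological behaviour on unbounded domains: for `n ≥ 2`, `Ω = {xₙ > 0}` and
`E = {xₙ < -r}`, one has `Per_r(E, Ω) = 0` while `Per_s(E, Ω) = ∞` for every `s > r`. -/
theorem pathological_unbounded (n : ℕ) (hn : 2 ≤ n) (r : ℝ) (hr : 0 < r) :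
    perR n r {x : EuclideanSpace ℝ (Fin n) | x ⟨n - 1, by omega⟩ < -r}
        {x : EuclideanSpace ℝ (Fin n) | 0 < x ⟨n - 1, by omega⟩} = 0 ∧
    ∀ s : ℝ, r < s →
      perR n s {x : EuclideanSpace ℝ (Fin n) | x ⟨n - 1, by omega⟩ < -r}
        {x : EuclideanSpace ℝ (Fin n) | 0 < x ⟨n - 1, by omega⟩} = ⊤ := by
  set i : Fin n := ⟨n - 1, by omega⟩ with hi
  have hfr := frontier_dop (n := n) i r
  set H : Set (EuclideanSpace ℝ (Fin n)) := {x | x i = -r} with hH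
  constructor
  · -- Per_r = 0
    have hempty : thickening r H ∩ {x : EuclideanSpace ℝ (Fin n) | 0 < x i} = ∅ := by
      ext x
      simp only [Set.mem_inter_iff, Set.mem_empty_iff_false, iff_false, not_and,
        Set.mem_setOf_eq]
      intro hx hxp
      obtain ⟨y, hy, hd⟩ := Metric.mem_thickening_iff.mp hx
      have h1 : |x i - y i| ≤ dist x y := coord_dist i x y
      have h2 : y i = -r := hy
      have h3 : x i - y i ≤ |x i - y i| := le_abs_self _
      rw [h2] at h1 h3
      linarith [h1.trans_lt hd]
    rw [perR, hfr, hempty]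
    simp
  · -- Per_s = ⊤ for s > r
    intro s hs
    have hslab : thickening s H ∩ {x : EuclideanSpace ℝ (Fin n) | 0 < x i}
        = {x : EuclideanSpace ℝ (Fin n) | 0 < x i ∧ x i < s - r} := by
      ext x
      simp only [Set.mem_inter_iff, Set.mem_setOf_eq]
      constructor
      · rintro ⟨hx, hxp⟩
        obtain ⟨y, hy, hd⟩ := Metric.mem_thickening_iff.mp hx
        have h1 : |x i - y i| ≤ dist x y := coord_dist i x y
        have h2 : y i = -r := hy
        have h3 : x i - y i ≤ |x i - y i| := le_abs_self _
        rw [h2] at h1 h3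
        refine ⟨hxp, by linarith [h1.trans_lt hd]⟩
      · rintro ⟨hxp, hxs⟩
        refine ⟨Metric.mem_thickening_iff.mpr
          ⟨x - (x i + r) • EuclideanSpace.single i (1:ℝ), ?_, ?_⟩, hxp⟩
        · show (x - (x i + r) • EuclideanSpace.single i (1:ℝ)) i = -r
          simp [EuclideanSpace.single_apply]
        · rw [dist_eq_norm, sub_sub_cancel, norm_smul, EuclideanSpace.norm_single]
          simp only [Real.norm_eq_abs, norm_one, mul_one]
          rw [abs_of_pos (by linarith)]
          linarith
    rw [perR, hfr, hslab, volume_slab hn i (by linarith)]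
    exact ENNReal.top_div_of_ne_top ENNReal.ofReal_ne_top
end
end

section
/- Existence for the Dirichlet problem: let r > 0, let Ω ⊆ ℝⁿ be bounded open, let Ω' be open with closure contained in Ω, and let E_o ⊆ ℝⁿ be measurable. Then there exists a measurable set E ⊆ ℝⁿ with E \ Ω' = E_o \ Ω' such that Per_r(E, Ω) ≤ Per_r(F, Ω) for every measurable F ⊆ ℝⁿ with F \ Ω' = E_o \ Ω'. The same holds with Per_r(·, Ω) replaced by F_{r,g}(·, Ω) for any g ∈ L¹_loc(ℝⁿ). -/
open MeasureTheory Metric Set Filter Topology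
open scoped RealInnerProductSpace ENNReal

noncomputable section

/-- The energy `F_{r,g}(E, Ω) = Per_r(E, Ω) + ∫_{E ∩ Ω} g`, as an extended real number. -/
def FRG (n : ℕ) (r : ℝ) (g : EuclideanSpace ℝ (Fin n) → ℝ)
    (E Ω : Set (EuclideanSpace ℝ (Fin n))) : EReal :=
  (perR n r E Ω : EReal) + ((∫ x in E ∩ Ω, g x : ℝ) : EReal)

section Density
variable {n : ℕ}

lemma vol_sphere (z : EuclideanSpace ℝ (Fin n)) {ρ : ℝ} (hρ : ρ ≠ 0) :
    volume (sphere z ρ) = 0 :=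
  Measure.addHaar_sphere_of_ne_zero _ _ hρ

lemma vol_inter_closedBall_eq (A : Set (EuclideanSpace ℝ (Fin n))) (z : EuclideanSpace ℝ (Fin n))
    {ρ : ℝ} (hρ : 0 < ρ) : volume (A ∩ closedBall z ρ) = volume (A ∩ ball z ρ) := by
  refine le_antisymm ?_ (measure_mono (inter_subset_inter_right _ ball_subset_closedBall))
  calc volume (A ∩ closedBall z ρ) ≤ volume ((A ∩ ball z ρ) ∪ sphere z ρ) := by
        refine measure_mono fun x hx => ?_
        rcases hx with ⟨hxA, hxB⟩
        rw [← ball_union_sphere] at hxB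
        rcases hxB with h | h
        · exact Or.inl ⟨hxA, h⟩
        · exact Or.inr h
    _ ≤ volume (A ∩ ball z ρ) + volume (sphere z ρ) := measure_union_le _ _
    _ = volume (A ∩ ball z ρ) := by rw [vol_sphere z hρ.ne', add_zero]

lemma vol_closedBall_eq (z : EuclideanSpace ℝ (Fin n)) {ρ : ℝ} (hρ : 0 < ρ) :
    volume (closedBall z ρ) = volume (ball z ρ) := by
  simpa using vol_inter_closedBall_eq univ z hρ

lemma mem_densityOnePoints_iff {A : Set (EuclideanSpace ℝ (Fin n))} {z : EuclideanSpace ℝ (Fin n)} :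
    z ∈ densityOnePoints n A ↔ Tendsto
      (fun ρ : ℝ => volume (A ∩ closedBall z ρ) / volume (closedBall z ρ)) (𝓝[>] 0) (𝓝 1) := by
  have he : (fun ρ : ℝ => volume (A ∩ ball z ρ) / volume (ball z ρ))
      =ᶠ[𝓝[>] (0:ℝ)] fun ρ : ℝ => volume (A ∩ closedBall z ρ) / volume (closedBall z ρ) := by
    filter_upwards [self_mem_nhdsWithin] with ρ (hρ : 0 < ρ)
    rw [vol_inter_closedBall_eq A z hρ, vol_closedBall_eq z hρ]
  exact tendsto_congr' he

lemma exists_mem_densityOnePoints {A B : Set (EuclideanSpace ℝ (Fin n))} (hB : MeasurableSet B)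
    (h : volume (A ∩ B) ≠ 0) : ∃ z ∈ B, z ∈ densityOnePoints n A := by
  by_contra hc
  push_neg at hc
  have hae := Besicovitch.ae_tendsto_measure_inter_div (volume : Measure (EuclideanSpace ℝ (Fin n))) A
  have hBsub : B ⊆ {x | ¬ Tendsto (fun ρ : ℝ =>
      volume (A ∩ closedBall x ρ) / volume (closedBall x ρ)) (𝓝[>] 0) (𝓝 1)} := by
    intro x hx
    exact fun ht => hc x hx (mem_densityOnePoints_iff.2 ht)
  have h0 : (volume.restrict A) B = 0 := by
    refine measure_mono_null hBsub ?_
    exact ae_iff.1 hae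
  rw [Measure.restrict_apply hB, inter_comm] at h0
  exact h h0

lemma exists_not_mem_densityOnePoints {A B : Set (EuclideanSpace ℝ (Fin n))}
    (hA : MeasurableSet A) (hB : MeasurableSet B)
    (h : volume (Aᶜ ∩ B) ≠ 0) : ∃ z ∈ B, z ∉ densityOnePoints n A := by
  obtain ⟨z, hzB, hz⟩ := exists_mem_densityOnePoints (A := Aᶜ) hB h
  refine ⟨z, hzB, fun hz' => ?_⟩
  have hsum : ∀ᶠ ρ in 𝓝[>] (0:ℝ),
      volume (Aᶜ ∩ ball z ρ) / volume (ball z ρ) + volume (A ∩ ball z ρ) / volume (ball z ρ)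
        = 1 := by
    filter_upwards [self_mem_nhdsWithin] with ρ (hρ : 0 < ρ)
    have hvb : volume (Aᶜ ∩ ball z ρ) + volume (A ∩ ball z ρ) = volume (ball z ρ) := by
      have := measure_inter_add_diff (μ := (volume : Measure (EuclideanSpace ℝ (Fin n))))
        (ball z ρ) hA
      rw [inter_comm (ball z ρ) A, diff_eq, inter_comm (ball z ρ) (Aᶜ)] at this
      rw [add_comm]
      exact this
    rw [← ENNReal.add_div, hvb, ENNReal.div_self (measure_ball_pos volume z hρ).ne'
      measure_ball_lt_top.ne]
  have h2 : Tendsto (fun ρ : ℝ =>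
      volume (Aᶜ ∩ ball z ρ) / volume (ball z ρ) + volume (A ∩ ball z ρ) / volume (ball z ρ))
      (𝓝[>] 0) (𝓝 2) := by
    have h := Tendsto.add hz hz'
    have : (1 : ℝ≥0∞) + 1 = 2 := one_add_one_eq_two
    rwa [this] at h
  have h1 : Tendsto (fun ρ : ℝ =>
      volume (Aᶜ ∩ ball z ρ) / volume (ball z ρ) + volume (A ∩ ball z ρ) / volume (ball z ρ))
      (𝓝[>] 0) (𝓝 1) := Tendsto.congr' (hsum.mono fun ρ h => h.symm) tendsto_const_nhds
  have : (2 : ℝ≥0∞) = 1 := tendsto_nhds_unique h2 h1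
  norm_num at this

end Density

section C2
variable {n : ℕ}

/-- If `y` is in the closure of the density-one points of `A`, every ball around `y` meets `A`
in positive measure. -/
lemma vol_pos_of_mem_closure_density {A : Set (EuclideanSpace ℝ (Fin n))}
    {y : EuclideanSpace ℝ (Fin n)} {δ : ℝ} (hδ : 0 < δ)
    (hy : y ∈ closure (densityOnePoints n A)) : volume (A ∩ ball y δ) ≠ 0 := by
  obtain ⟨z, hz, hzy⟩ := Metric.mem_closure_iff.1 hy (δ/2) (by linarith)
  have hz' : Tendsto (fun ρ : ℝ => volume (A ∩ ball z ρ) / volume (ball z ρ)) (𝓝[>] 0) (𝓝 1) := hz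
  have h1 : ∀ᶠ ρ in 𝓝[>] (0:ℝ),
      (1:ℝ≥0∞)/2 < volume (A ∩ ball z ρ) / volume (ball z ρ) :=
    hz'.eventually (eventually_gt_nhds (by norm_num))
  have h2 : ∀ᶠ ρ in 𝓝[>] (0:ℝ), ρ ∈ Ioo (0:ℝ) (δ/2) :=
    Ioo_mem_nhdsGT_of_mem ⟨le_refl 0, by linarith⟩
  obtain ⟨ρ, hρ1, hρ2⟩ := (h1.and h2).exists
  have hpos : volume (A ∩ ball z ρ) ≠ 0 := by
    intro h0
    rw [h0, ENNReal.zero_div] at hρ1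
    simp at hρ1
  refine fun h0 => hpos (measure_mono_null ?_ h0)
  refine inter_subset_inter_right _ fun w hw => ?_
  have : dist w y ≤ dist w z + dist z y := dist_triangle w z y
  have hwz : dist w z < ρ := mem_ball.1 hw
  have : dist w y < δ := by
    have := hρ2.2
    calc dist w y ≤ dist w z + dist z y := dist_triangle w z y
      _ < ρ + δ/2 := by
          have := dist_comm z y ▸ hzy
          exact add_lt_add hwz (by rwa [dist_comm])
      _ < δ := by linarith [hρ2.2]
  exact mem_ball.2 this

/-- If `y` is in the closure of the complement of the density-one points of `A` (with `A`
measurable), every ball around `y` meets `Aᶜ` in positive measure. -/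
lemma vol_compl_pos_of_mem_closure_compl {A : Set (EuclideanSpace ℝ (Fin n))}
    (hA : MeasurableSet A) {y : EuclideanSpace ℝ (Fin n)} {δ : ℝ} (hδ : 0 < δ)
    (hy : y ∈ closure ((densityOnePoints n A)ᶜ)) : volume (Aᶜ ∩ ball y δ) ≠ 0 := by
  obtain ⟨z, hz, hzy⟩ := Metric.mem_closure_iff.1 hy (δ/2) (by linarith)
  intro h0
  apply hz
  show Tendsto (fun ρ : ℝ => volume (A ∩ ball z ρ) / volume (ball z ρ)) (𝓝[>] 0) (𝓝 1)
  have hkey : ∀ᶠ ρ in 𝓝[>] (0:ℝ),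
      volume (A ∩ ball z ρ) / volume (ball z ρ) = 1 := by
    filter_upwards [Ioo_mem_nhdsGT_of_mem (⟨le_refl 0, by linarith⟩ : (0:ℝ) ∈ Ico 0 (δ/2))]
      with ρ hρ
    have hsub : ball z ρ ⊆ ball y δ := fun w hw => by
      rw [mem_ball] at *
      calc dist w y ≤ dist w z + dist z y := dist_triangle w z y
        _ < ρ + δ/2 := add_lt_add hw (by rwa [dist_comm])
        _ < δ := by linarith [hρ.2]
    have hdiff : volume (ball z ρ \ A) = 0 := by
      refine measure_mono_null (fun w hw => ?_) h0
      exact ⟨hw.2, hsub hw.1⟩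
    have : volume (ball z ρ ∩ A) + volume (ball z ρ \ A) = volume (ball z ρ) :=
      measure_inter_add_diff _ hA
    rw [hdiff, add_zero] at this
    rw [inter_comm, this, ENNReal.div_self (measure_ball_pos volume z hρ.1).ne'
      measure_ball_lt_top.ne]
  exact Tendsto.congr' (hkey.mono fun ρ h => h.symm) tendsto_const_nhds

/-- A ball meeting a set and its complement meets the frontier. -/
lemma frontier_inter_ball {D : Set (EuclideanSpace ℝ (Fin n))} {y : EuclideanSpace ℝ (Fin n)}
    {δ : ℝ} (h1 : ∃ z ∈ ball y δ, z ∈ D) (h2 : ∃ z ∈ ball y δ, z ∉ D) :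
    ∃ w ∈ ball y δ, w ∈ frontier D := by
  by_contra hc
  push_neg at hc
  obtain ⟨z1, hz1B, hz1⟩ := h1
  obtain ⟨z2, hz2B, hz2⟩ := h2
  have hcov : ball y δ ⊆ interior D ∪ interior Dᶜ := by
    intro x hx
    by_cases hxD : x ∈ D
    · left; rw [← self_diff_frontier]; exact ⟨hxD, hc x hx⟩
    · right; rw [← self_diff_frontier]
      exact ⟨hxD, by rw [frontier_compl]; exact hc x hx⟩
  have hpc : IsPreconnected (ball y δ) := (convex_ball y δ).isPreconnected
  obtain ⟨x, -, hx⟩ := hpc (interior D) (interior Dᶜ) isOpen_interior isOpen_interior hcov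
    ⟨z1, hz1B, by rw [← self_diff_frontier]; exact ⟨hz1, hc z1 hz1B⟩⟩
    ⟨z2, hz2B, by rw [← self_diff_frontier, frontier_compl]; exact ⟨hz2, hc z2 hz2B⟩⟩
  exact (interior_subset hx.2) (interior_subset hx.1)

/-- The key geometric lemma: if a ball `B(y,δ)` meets both `F` and `Fᶜ` in positive measure,
then a ball around any `x` with `dist x y + δ < r` is inside the `r`-thickening of the frontier
of the density-one points of `F`. -/
lemma key_ball {F : Set (EuclideanSpace ℝ (Fin n))} (hF : MeasurableSet F)
    {y x : EuclideanSpace ℝ (Fin n)} {δ r : ℝ}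
    (h1 : volume (F ∩ ball y δ) ≠ 0) (h2 : volume (Fᶜ ∩ ball y δ) ≠ 0)
    (hxy : dist x y + δ < r) :
    ball x (r - dist x y - δ) ⊆ thickening r (frontier (densityOnePoints n F)) := by
  obtain ⟨z1, hz1B, hz1⟩ := exists_mem_densityOnePoints measurableSet_ball h1
  obtain ⟨z2, hz2B, hz2⟩ := exists_not_mem_densityOnePoints hF measurableSet_ball h2
  obtain ⟨w, hwB, hwf⟩ := frontier_inter_ball ⟨z1, hz1B, hz1⟩ ⟨z2, hz2B, hz2⟩
  intro p hp
  rw [mem_thickening_iff]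
  refine ⟨w, hwf, ?_⟩
  have h3 : dist p x < r - dist x y - δ := mem_ball.1 hp
  have h4 : dist w y < δ := mem_ball.1 hwB
  calc dist p w ≤ dist p x + dist x w := dist_triangle p x w
    _ ≤ dist p x + (dist x y + dist y w) := by linarith [dist_triangle x y w]
    _ < (r - dist x y - δ) + (dist x y + δ) := by rw [dist_comm y w]; linarith
    _ = r := by ring

end C2

section ULim

lemma exists_ulim (U : Ultrafilter ℕ) (f : ℕ → ℝ≥0∞) : ∃ a, Tendsto f ↑U (𝓝 a) := by
  obtain ⟨a, -, ha⟩ := isCompact_univ.ultrafilter_le_nhds (U.map f)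
    (by simp [le_principal_iff])
  exact ⟨a, ha⟩

/-- An ultrafilter limit of the measures `μ` restricted to `S k`, for sets `S k` inside a set `W`
of finite measure, is a bona fide measure dominated by `μ`. -/
lemma ulim_measure (U : Ultrafilter ℕ) {α : Type*} [MeasurableSpace α] (μ : Measure α)
    (S : ℕ → Set α) (hS : ∀ k, MeasurableSet (S k)) (W : Set α) (hW : MeasurableSet W)
    (hWf : μ W ≠ ⊤) (hSW : ∀ k, S k ⊆ W) :
    ∃ ν : Measure α, (∀ A, MeasurableSet A → Tendsto (fun k => μ (S k ∩ A)) ↑U (𝓝 (ν A))) ∧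
      ν ≤ μ ∧ IsFiniteMeasure ν := by
  classical
  set m : (A : Set α) → MeasurableSet A → ℝ≥0∞ :=
    fun A _ => (exists_ulim U (fun k => μ (S k ∩ A))).choose with hm_def
  have hm : ∀ (A : Set α) (hA : MeasurableSet A),
      Tendsto (fun k => μ (S k ∩ A)) ↑U (𝓝 (m A hA)) :=
    fun A hA => (exists_ulim U (fun k => μ (S k ∩ A))).choose_spec
  have m0 : m ∅ MeasurableSet.empty = 0 := by
    refine tendsto_nhds_unique (hm ∅ MeasurableSet.empty) ?_
    simpa using (tendsto_const_nhds : Tendsto (fun _ : ℕ => (0:ℝ≥0∞)) ↑U (𝓝 0))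
  have mU : ∀ ⦃f : ℕ → Set α⦄ (h : ∀ i, MeasurableSet (f i)), Pairwise (Function.onFun Disjoint f) →
      m (⋃ i, f i) (MeasurableSet.iUnion h) = ∑' i, m (f i) (h i) := by
    intro f hf hd
    have hdT : ∀ (T : Set α), Pairwise (Function.onFun Disjoint fun i => T ∩ f i) := fun T i j hij =>
      (hd hij).mono inter_subset_right inter_subset_right
    set a := m (⋃ i, f i) (MeasurableSet.iUnion hf) with ha_def
    have ha := hm (⋃ i, f i) (MeasurableSet.iUnion hf)
    refine le_antisymm ?_ ?_
    · -- a ≤ ∑'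
      have key : ∀ J : ℕ, a ≤ (∑ i ∈ Finset.range J, m (f i) (hf i)) + μ (W ∩ ⋃ i, f (i + J)) := by
        intro J
        have hpt : ∀ k, μ (S k ∩ ⋃ i, f i) ≤
            (∑ i ∈ Finset.range J, μ (S k ∩ f i)) + μ (W ∩ ⋃ i, f (i + J)) := by
          intro k
          have hsub : S k ∩ ⋃ i, f i ⊆ (⋃ i ∈ Finset.range J, S k ∩ f i) ∪ (W ∩ ⋃ i, f (i + J)) := by
            rintro x ⟨hxS, hxU⟩
            obtain ⟨i, hi⟩ := mem_iUnion.1 hxU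
            by_cases hiJ : i < J
            · exact Or.inl (mem_biUnion (Finset.mem_range.2 hiJ) ⟨hxS, hi⟩)
            · refine Or.inr ⟨hSW k hxS, mem_iUnion.2 ⟨i - J, ?_⟩⟩
              rwa [Nat.sub_add_cancel (not_lt.1 hiJ)]
          calc μ (S k ∩ ⋃ i, f i) ≤ μ (⋃ i ∈ Finset.range J, S k ∩ f i) + μ (W ∩ ⋃ i, f (i + J)) :=
                (measure_mono hsub).trans (measure_union_le _ _)
            _ ≤ (∑ i ∈ Finset.range J, μ (S k ∩ f i)) + μ (W ∩ ⋃ i, f (i + J)) := by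
                gcongr
                exact measure_biUnion_finset_le _ _
        have hrhs : Tendsto (fun k => (∑ i ∈ Finset.range J, μ (S k ∩ f i)) + μ (W ∩ ⋃ i, f (i + J)))
            ↑U (𝓝 ((∑ i ∈ Finset.range J, m (f i) (hf i)) + μ (W ∩ ⋃ i, f (i + J)))) :=
          (tendsto_finset_sum _ (fun i _ => hm (f i) (hf i))).add tendsto_const_nhds
        exact le_of_tendsto_of_tendsto ha hrhs (Eventually.of_forall hpt)
      have h1 : Tendsto (fun J => ∑ i ∈ Finset.range J, m (f i) (hf i)) atTop
          (𝓝 (∑' i, m (f i) (hf i))) := ENNReal.tendsto_nat_tsum _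
      have htsum : ∑' i, μ (W ∩ f i) ≠ ⊤ := by
        rw [← measure_iUnion (hdT W) (fun i => hW.inter (hf i))]
        exact (lt_of_le_of_lt (measure_mono (iUnion_subset fun i => inter_subset_left))
          hWf.lt_top).ne
      have h2 : Tendsto (fun J => μ (W ∩ ⋃ i, f (i + J))) atTop (𝓝 0) := by
        have heq : ∀ J, μ (W ∩ ⋃ i, f (i + J)) = ∑' i, μ (W ∩ f (i + J)) := by
          intro J
          rw [inter_iUnion]
          exact measure_iUnion (fun i j hij => (hdT W (by simpa using hij)))
            (fun i => hW.inter (hf (i + J)))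
        simp only [heq]
        exact ENNReal.tendsto_sum_nat_add _ htsum
      have hJlim : Tendsto (fun J => (∑ i ∈ Finset.range J, m (f i) (hf i)) + μ (W ∩ ⋃ i, f (i + J)))
          atTop (𝓝 (∑' i, m (f i) (hf i))) := by
        simpa using h1.add h2
      exact ge_of_tendsto hJlim (Eventually.of_forall key)
    · -- ∑' ≤ a
      rw [ENNReal.tsum_eq_iSup_sum]
      refine iSup_le fun s => ?_
      have hpt : ∀ k, (∑ i ∈ s, μ (S k ∩ f i)) ≤ μ (S k ∩ ⋃ i, f i) := by
        intro k
        rw [← measure_biUnion_finset (fun i _ j _ hij => hdT (S k) hij)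
          (fun i _ => (hS k).inter (hf i))]
        refine measure_mono (iUnion₂_subset fun i _ => inter_subset_inter_right _
          (subset_iUnion f i))
      exact le_of_tendsto_of_tendsto (tendsto_finset_sum _ (fun i _ => hm (f i) (hf i))) ha
        (Eventually.of_forall hpt)
  refine ⟨Measure.ofMeasurable m m0 mU, fun A hA => ?_, ?_, ?_⟩
  · rw [Measure.ofMeasurable_apply A hA]; exact hm A hA
  · rw [Measure.le_iff]
    intro s hs
    rw [Measure.ofMeasurable_apply s hs]
    exact le_of_tendsto (hm s hs) (Eventually.of_forall fun k => measure_mono inter_subset_right)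
  · refine ⟨?_⟩
    rw [Measure.ofMeasurable_apply univ MeasurableSet.univ]
    refine lt_of_le_of_lt (le_of_tendsto (hm univ MeasurableSet.univ)
      (Eventually.of_forall fun k => ?_)) hWf.lt_top
    exact measure_mono ((inter_subset_left).trans (hSW k))

end ULim

section UInt
variable {α : Type*} [MeasurableSpace α] {μ : Measure α}

set_option synthInstance.maxHeartbeats 1000000 in
set_option maxHeartbeats 1000000 in
/-- Ultrafilter limit of integrals over `S k` against an integrable `g`, identified with the
integral against the Radon–Nikodym density of the limit measure. -/
lemma ulim_integral (U : Ultrafilter ℕ) (μ : Measure α) [SigmaFinite μ] (S : ℕ → Set α)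
    (hS : ∀ k, MeasurableSet (S k)) (Ω' : Set α) (hΩ'm : MeasurableSet Ω')
    (hSΩ : ∀ k, S k ⊆ Ω') (ν : Measure α) [IsFiniteMeasure ν]
    (hν : ∀ A, MeasurableSet A → Tendsto (fun k => μ (S k ∩ A)) ↑U (𝓝 (ν A)))
    (hle : ν ≤ μ) (g : α → ℝ) (hg : IntegrableOn g Ω' μ) :
    Tendsto (fun k => ∫ x in S k, g x ∂μ) ↑U
      (𝓝 (∫ x in Ω', g x * min (ν.rnDeriv μ x).toReal 1 ∂μ)) := by
  classical
  set w : α → ℝ := fun x => min (ν.rnDeriv μ x).toReal 1 with hw_def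
  have hwm : Measurable w := (Measure.measurable_rnDeriv ν μ).ennreal_toReal.min measurable_const
  have hw0 : ∀ x, 0 ≤ w x := fun x => le_min ENNReal.toReal_nonneg zero_le_one
  have hw1 : ∀ x, w x ≤ 1 := fun x => min_le_right _ _
  have hwnorm : ∀ x, ‖w x‖ ≤ 1 := fun x => by
    rw [Real.norm_eq_abs, abs_of_nonneg (hw0 x)]; exact hw1 x
  have hrest : ∀ k, μ.restrict (S k) ≤ μ.restrict Ω' := fun k =>
    Measure.restrict_mono (hSΩ k) le_rfl
  have hmono : ∀ (f : α → ℝ), Integrable f (μ.restrict Ω') → ∀ k,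
      Integrable f (μ.restrict (S k)) := fun f hf k => hf.mono_measure (hrest k)
  have hmul : ∀ (f : α → ℝ), Integrable f (μ.restrict Ω') →
      Integrable (fun x => f x * w x) (μ.restrict Ω') := by
    intro f hf
    have := hf.bdd_mul (hwm.aestronglyMeasurable) (Eventually.of_forall hwnorm)
    exact this.congr (Eventually.of_forall fun x => mul_comm _ _)
  -- the uniform bound
  have hbound : ∀ (f : α → ℝ), Integrable f (μ.restrict Ω') → ∀ k,
      |∫ x in S k, f x ∂μ| ≤ ∫ x in Ω', |f x| ∂μ := by
    intro f hf k
    calc |∫ x in S k, f x ∂μ| ≤ ∫ x in S k, |f x| ∂μ := by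
          simpa [Real.norm_eq_abs] using
            norm_integral_le_integral_norm (μ := μ.restrict (S k)) f
      _ ≤ ∫ x in Ω', |f x| ∂μ := by
          refine setIntegral_mono_set hf.abs (Eventually.of_forall fun x => abs_nonneg _)
            (HasSubset.Subset.eventuallyLE (hSΩ k))
  have hboundw : ∀ (f : α → ℝ), Integrable f (μ.restrict Ω') →
      |∫ x in Ω', f x * w x ∂μ| ≤ ∫ x in Ω', |f x| ∂μ := by
    intro f hf
    calc |∫ x in Ω', f x * w x ∂μ| ≤ ∫ x in Ω', |f x| * |w x| ∂μ := by
          simpa [Real.norm_eq_abs, abs_mul] using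
            norm_integral_le_integral_norm (μ := μ.restrict Ω') (fun x => f x * w x)
      _ ≤ ∫ x in Ω', |f x| ∂μ := by
          refine integral_mono_ae
            (((hmul f hf).abs).congr (Eventually.of_forall fun x => abs_mul (f x) (w x)))
            hf.abs (Eventually.of_forall fun x => ?_)
          dsimp only
          refine mul_le_of_le_one_right (abs_nonneg _) ?_
          rw [abs_of_nonneg (hw0 x)]; exact hw1 x
  have hν0 : ν Ω'ᶜ = 0 := by
    refine tendsto_nhds_unique (hν Ω'ᶜ hΩ'm.compl) ?_
    have : ∀ k, μ (S k ∩ Ω'ᶜ) = 0 := fun k => by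
      have : S k ∩ Ω'ᶜ = ∅ := by
        rw [eq_empty_iff_forall_notMem]; exact fun x hx => hx.2 (hSΩ k hx.1)
      rw [this, measure_empty]
    simpa [this] using (tendsto_const_nhds : Tendsto (fun _ : ℕ => (0:ℝ≥0∞)) ↑U (𝓝 0))
  have hac : ν ≪ μ := Measure.absolutelyContinuous_of_le hle
  -- the predicate
  set P : (α → ℝ) → Prop := fun f =>
    Tendsto (fun k => ∫ x in S k, f x ∂μ) ↑U (𝓝 (∫ x in Ω', f x * w x ∂μ)) with hP_def
  suffices h : P g from h
  refine Integrable.induction (μ := μ.restrict Ω') P ?_ ?_ ?_ ?_ hg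
  · -- indicators
    intro c s hs hsf
    have hνs : ν s ≠ ⊤ := measure_ne_top ν s
    have hLHS : ∀ k, ∫ x in S k, s.indicator (fun _ => c) x ∂μ = (μ (S k ∩ s)).toReal • c := by
      intro k
      rw [setIntegral_indicator hs, setIntegral_const]
      rfl
    have hlim : Tendsto (fun k => (μ (S k ∩ s)).toReal • c) ↑U (𝓝 ((ν s).toReal • c)) :=
      ((ENNReal.tendsto_toReal hνs).comp (hν s hs)).smul_const c
    have hRHS : ∫ x in Ω', s.indicator (fun _ => c) x * w x ∂μ = (ν s).toReal • c := by
      have heq : (fun x => s.indicator (fun _ => c) x * w x)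
          = s.indicator (fun x => c * w x) := by
        funext x
        by_cases hx : x ∈ s <;> simp [indicator_of_mem, indicator_of_notMem, hx]
      rw [heq, setIntegral_indicator hs]
      have h1 : ∫ x in Ω' ∩ s, c * w x ∂μ = c * ∫ x in Ω' ∩ s, w x ∂μ := integral_const_mul c _
      have h2 : ∫ x in Ω' ∩ s, w x ∂μ = (ν s).toReal := by
        have hwae : w =ᵐ[μ.restrict (Ω' ∩ s)] fun x => (ν.rnDeriv μ x).toReal := by
          refine ae_restrict_of_ae ?_
          filter_upwards [Measure.rnDeriv_le_one_of_le hle] with x hx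
          exact min_eq_left (by
            calc (ν.rnDeriv μ x).toReal ≤ (1 : ℝ≥0∞).toReal := ENNReal.toReal_mono ENNReal.one_ne_top hx
              _ = 1 := by simp)
        rw [integral_congr_ae hwae, integral_toReal
          ((Measure.measurable_rnDeriv ν μ).aemeasurable) (ae_restrict_of_ae
            (Measure.rnDeriv_lt_top ν μ)),
          Measure.setLIntegral_rnDeriv' hac (hΩ'm.inter hs)]
        have : ν (Ω' ∩ s) = ν s := by
          have h3 : ν (s ∩ Ω') + ν (s \ Ω') = ν s := measure_inter_add_diff s hΩ'm
          have h4 : ν (s \ Ω') = 0 := measure_mono_null (fun x hx => hx.2) hν0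
          rw [h4, add_zero] at h3
          rw [inter_comm]; exact h3
        rw [this]
      rw [h1, h2, smul_eq_mul, mul_comm]
    rw [hP_def]
    simp only [hRHS]
    exact Tendsto.congr (fun k => (hLHS k).symm) hlim
  · -- addition
    intro f1 f2 hdisj h1 h2 P1 P2
    have hL : ∀ k, ∫ x in S k, (f1 + f2) x ∂μ
        = (∫ x in S k, f1 x ∂μ) + ∫ x in S k, f2 x ∂μ := fun k =>
      integral_add (hmono f1 h1 k) (hmono f2 h2 k)
    have hR : ∫ x in Ω', (f1 + f2) x * w x ∂μ
        = (∫ x in Ω', f1 x * w x ∂μ) + ∫ x in Ω', f2 x * w x ∂μ := by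
      have : (fun x => (f1 + f2) x * w x) = fun x => f1 x * w x + f2 x * w x := by
        funext x; simp [add_mul]
      rw [this]
      exact integral_add (hmul f1 h1) (hmul f2 h2)
    rw [hP_def]
    simp only [hL, hR]
    exact (P1.add P2)
  · -- closedness in L¹
    refine IsSeqClosed.isClosed ?_
    intro fm F hfm hlim
    show Tendsto (fun k => ∫ x in S k, (F : α → ℝ) x ∂μ) ↑U (𝓝 (∫ x in Ω', (F : α → ℝ) x * w x ∂μ))
    rw [Metric.tendsto_nhds]
    intro ε hε
    obtain ⟨m, hm⟩ := Metric.tendsto_atTop.1 hlim (ε/3) (by linarith)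
    have hFi : Integrable (F : α → ℝ) (μ.restrict Ω') := L1.integrable_coeFn F
    have hfmi : Integrable (fm m : α → ℝ) (μ.restrict Ω') := L1.integrable_coeFn (fm m)
    have hdiff : Integrable (fun x => (fm m : α → ℝ) x - (F : α → ℝ) x) (μ.restrict Ω') :=
      hfmi.sub hFi
    have hnorm : ∫ x in Ω', |(fm m : α → ℝ) x - (F : α → ℝ) x| ∂μ < ε/3 := by
      have h1 : ‖fm m - F‖ = ∫ x in Ω', ‖(fm m - F : α →₁[μ.restrict Ω'] ℝ) x‖ ∂μ :=
        L1.norm_eq_integral_norm _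
      have h2 : ∫ x in Ω', ‖(fm m - F : α →₁[μ.restrict Ω'] ℝ) x‖ ∂μ
          = ∫ x in Ω', |(fm m : α → ℝ) x - (F : α → ℝ) x| ∂μ := by
        refine integral_congr_ae ?_
        filter_upwards [Lp.coeFn_sub (fm m) F] with x hx
        rw [hx]; simp [Real.norm_eq_abs]
      rw [← h2, ← h1]
      have := hm m le_rfl
      rwa [dist_eq_norm] at this
    have hPm : Tendsto (fun k => ∫ x in S k, (fm m : α → ℝ) x ∂μ) ↑U
        (𝓝 (∫ x in Ω', (fm m : α → ℝ) x * w x ∂μ)) := hfm m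
    rw [Metric.tendsto_nhds] at hPm
    filter_upwards [hPm (ε/3) (by linarith)] with k hk
    have e1 : |(∫ x in S k, (F : α → ℝ) x ∂μ) - ∫ x in S k, (fm m : α → ℝ) x ∂μ| ≤
        ∫ x in Ω', |(fm m : α → ℝ) x - (F : α → ℝ) x| ∂μ := by
      rw [← integral_sub (hmono _ hFi k) (hmono _ hfmi k)]
      have := hbound (fun x => (F : α → ℝ) x - (fm m : α → ℝ) x) (hFi.sub hfmi) k
      calc |∫ x in S k, ((F : α → ℝ) x - (fm m : α → ℝ) x) ∂μ|
          ≤ ∫ x in Ω', |(F : α → ℝ) x - (fm m : α → ℝ) x| ∂μ := this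
        _ = ∫ x in Ω', |(fm m : α → ℝ) x - (F : α → ℝ) x| ∂μ := by
            refine integral_congr_ae (Eventually.of_forall fun x => abs_sub_comm _ _)
    have e2 : |(∫ x in Ω', (fm m : α → ℝ) x * w x ∂μ) - ∫ x in Ω', (F : α → ℝ) x * w x ∂μ| ≤
        ∫ x in Ω', |(fm m : α → ℝ) x - (F : α → ℝ) x| ∂μ := by
      have heq : (∫ x in Ω', (fm m : α → ℝ) x * w x ∂μ) - ∫ x in Ω', (F : α → ℝ) x * w x ∂μ
          = ∫ x in Ω', ((fm m : α → ℝ) x - (F : α → ℝ) x) * w x ∂μ := by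
        rw [← integral_sub (hmul _ hfmi) (hmul _ hFi)]
        refine integral_congr_ae (Eventually.of_forall fun x => ?_)
        ring
      rw [heq]
      exact hboundw _ hdiff
    have e3 : dist (∫ x in S k, (fm m : α → ℝ) x ∂μ) (∫ x in Ω', (fm m : α → ℝ) x * w x ∂μ)
        < ε/3 := hk
    rw [Real.dist_eq] at e3 ⊢
    calc |(∫ x in S k, (F : α → ℝ) x ∂μ) - ∫ x in Ω', (F : α → ℝ) x * w x ∂μ|
        ≤ |(∫ x in S k, (F : α → ℝ) x ∂μ) - ∫ x in S k, (fm m : α → ℝ) x ∂μ|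
          + |(∫ x in S k, (fm m : α → ℝ) x ∂μ) - ∫ x in Ω', (fm m : α → ℝ) x * w x ∂μ|
          + |(∫ x in Ω', (fm m : α → ℝ) x * w x ∂μ) - ∫ x in Ω', (F : α → ℝ) x * w x ∂μ| := by
            have t1 := abs_sub_le (∫ x in S k, (F : α → ℝ) x ∂μ)
              (∫ x in S k, (fm m : α → ℝ) x ∂μ) (∫ x in Ω', (F : α → ℝ) x * w x ∂μ)
            have t2 := abs_sub_le (∫ x in S k, (fm m : α → ℝ) x ∂μ)
              (∫ x in Ω', (fm m : α → ℝ) x * w x ∂μ) (∫ x in Ω', (F : α → ℝ) x * w x ∂μ)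
            linarith
      _ < ε/3 + ε/3 + ε/3 := by
            refine add_lt_add (add_lt_add_of_le_of_lt (le_trans e1 hnorm.le) e3) (lt_of_le_of_lt e2 hnorm)
      _ = ε := by ring
  · -- a.e. congruence
    intro f1 f2 hae h1 P1
    rw [hP_def]
    have hL : ∀ k, ∫ x in S k, f2 x ∂μ = ∫ x in S k, f1 x ∂μ := fun k =>
      integral_congr_ae (ae_restrict_of_ae_restrict_of_subset (hSΩ k) (hae.symm))
    have hR : ∫ x in Ω', f2 x * w x ∂μ = ∫ x in Ω', f1 x * w x ∂μ := by
      refine integral_congr_ae ?_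
      filter_upwards [hae] with x hx
      rw [hx]
    simp only [hL, hR]
    exact P1

end UInt

section Main
variable {n : ℕ}

lemma perR_ne_top {r : ℝ} (hr : 0 < r) {E Ω : Set (EuclideanSpace ℝ (Fin n))}
    (hΩb : Bornology.IsBounded Ω) : perR n r E Ω ≠ ⊤ := by
  have h2r : ENNReal.ofReal (2*r) ≠ 0 := by
    rw [Ne, ENNReal.ofReal_eq_zero, not_le]; linarith
  exact (ENNReal.div_lt_top ((measure_mono inter_subset_right).trans_lt
    hΩb.measure_lt_top).ne h2r).ne

set_option maxHeartbeats 2000000 in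
lemma exists_min (r : ℝ) (hr : 0 < r) (Ω Ω' Eo : Set (EuclideanSpace ℝ (Fin n)))
    (hΩo : IsOpen Ω) (hΩb : Bornology.IsBounded Ω) (hΩ'o : IsOpen Ω') (hΩ' : closure Ω' ⊆ Ω)
    (hEo : MeasurableSet Eo) (g : EuclideanSpace ℝ (Fin n) → ℝ) (hgm : Measurable g)
    (hg : IntegrableOn g Ω) :
    ∃ E, MeasurableSet E ∧ E \ Ω' = Eo \ Ω' ∧
      ∀ F, MeasurableSet F → F \ Ω' = Eo \ Ω' →
        (perR n r E Ω).toReal + ∫ x in E ∩ Ω, g x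
          ≤ (perR n r F Ω).toReal + ∫ x in F ∩ Ω, g x := by
  classical
  have hΩ'm : MeasurableSet Ω' := hΩ'o.measurableSet
  have hΩ'sub : Ω' ⊆ Ω := subset_closure.trans hΩ'
  have hΩ'f : volume Ω' ≠ ⊤ := ((hΩb.subset hΩ'sub).measure_lt_top).ne
  have hΩf : volume Ω ≠ ⊤ := hΩb.measure_lt_top.ne
  have hgΩ' : IntegrableOn g Ω' := hg.mono_set hΩ'sub
  have h2r0 : ENNReal.ofReal (2*r) ≠ 0 := by
    rw [Ne, ENNReal.ofReal_eq_zero, not_le]; linarith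
  -- lower bound for the energies
  have hb : ∀ F : Set (EuclideanSpace ℝ (Fin n)), MeasurableSet F →
      -(∫ x in Ω, |g x|) ≤ (perR n r F Ω).toReal + ∫ x in F ∩ Ω, g x := by
    intro F hF
    have h1 : |∫ x in F ∩ Ω, g x| ≤ ∫ x in Ω, |g x| := by
      calc |∫ x in F ∩ Ω, g x| ≤ ∫ x in F ∩ Ω, |g x| := by
            simpa [Real.norm_eq_abs] using
              norm_integral_le_integral_norm (μ := volume.restrict (F ∩ Ω)) g
        _ ≤ ∫ x in Ω, |g x| := setIntegral_mono_set hg.abs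
            (Eventually.of_forall fun x => abs_nonneg _)
            (HasSubset.Subset.eventuallyLE inter_subset_right)
    have h2 : (0:ℝ) ≤ (perR n r F Ω).toReal := ENNReal.toReal_nonneg
    have := abs_le.1 h1
    linarith [this.1]
  set m := sInf ((fun F => (perR n r F Ω).toReal + ∫ x in F ∩ Ω, g x) ''
    {F | MeasurableSet F ∧ F \ Ω' = Eo \ Ω'}) with hm_def
  have hbdd : BddBelow ((fun F => (perR n r F Ω).toReal + ∫ x in F ∩ Ω, g x) ''
      {F | MeasurableSet F ∧ F \ Ω' = Eo \ Ω'}) := by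
    refine ⟨-(∫ x in Ω, |g x|), ?_⟩
    rintro y ⟨F, hF, rfl⟩
    exact hb F hF.1
  have hne : ((fun F => (perR n r F Ω).toReal + ∫ x in F ∩ Ω, g x) ''
      {F | MeasurableSet F ∧ F \ Ω' = Eo \ Ω'}).Nonempty := ⟨_, ⟨Eo, ⟨hEo, rfl⟩, rfl⟩⟩
  have hmle : ∀ F, MeasurableSet F → F \ Ω' = Eo \ Ω' →
      m ≤ (perR n r F Ω).toReal + ∫ x in F ∩ Ω, g x := fun F h1 h2 =>
    csInf_le hbdd ⟨F, ⟨h1, h2⟩, rfl⟩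
  -- minimizing sequence
  have hseq : ∀ k : ℕ, ∃ F, (MeasurableSet F ∧ F \ Ω' = Eo \ Ω') ∧
      (perR n r F Ω).toReal + ∫ x in F ∩ Ω, g x < m + 1/(k+1) := by
    intro k
    have hlt : m < m + 1/((k:ℝ)+1) := lt_add_of_pos_right m (by positivity)
    obtain ⟨y, ⟨F, hF, rfl⟩, hy⟩ := exists_lt_of_csInf_lt hne hlt
    refine ⟨F, hF, ?_⟩
    simpa using hy
  choose F hFC hFΦ using hseq
  have hFm : ∀ k, MeasurableSet (F k) := fun k => (hFC k).1
  have hFb : ∀ k, F k \ Ω' = Eo \ Ω' := fun k => (hFC k).2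
  have hEoF : ∀ k, Eo \ Ω' ⊆ F k := fun k x hx => by
    rw [← hFb k] at hx; exact hx.1
  set S : ℕ → Set (EuclideanSpace ℝ (Fin n)) := fun k => F k ∩ Ω' with hS_def
  have hSm : ∀ k, MeasurableSet (S k) := fun k => (hFm k).inter hΩ'm
  have hSΩ : ∀ k, S k ⊆ Ω' := fun k => inter_subset_right
  obtain ⟨U, hU⟩ := Filter.exists_ultrafilter_le (atTop : Filter ℕ)
  obtain ⟨ν, hν, hνle, hνfin⟩ := ulim_measure U volume S hSm Ω' hΩ'm hΩ'f hSΩ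
  haveI : IsFiniteMeasure ν := hνfin
  set u := ν.rnDeriv volume with hu_def
  have hum : Measurable u := Measure.measurable_rnDeriv ν volume
  have hule : u ≤ᵐ[volume] 1 := Measure.rnDeriv_le_one_of_le hνle
  have hac : ν ≪ volume := Measure.absolutelyContinuous_of_le hνle
  -- the candidate minimizer
  set E := (Eo \ Ω') ∪ (Ω' ∩ {x | u x = 1 ∨ (u x ≠ 0 ∧ g x ≤ 0)}) with hE_def
  have hPm : MeasurableSet {x | u x = 1 ∨ (u x ≠ 0 ∧ g x ≤ 0)} := by
    refine (hum (measurableSet_singleton 1)).union ?_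
    exact ((hum (measurableSet_singleton 0)).compl).inter (measurableSet_le hgm measurable_const)
  have hEm : MeasurableSet E := (hEo.diff hΩ'm).union (hΩ'm.inter hPm)
  have hEb : E \ Ω' = Eo \ Ω' := by
    rw [hE_def]
    ext x
    simp only [mem_diff, mem_union, mem_inter_iff, mem_setOf_eq]
    tauto
  -- membership facts
  have hEΩ'P : ∀ x, x ∈ E → x ∈ Ω' → (u x = 1 ∨ (u x ≠ 0 ∧ g x ≤ 0)) := by
    intro x hxE hxΩ
    rcases hxE with h | h
    · exact absurd hxΩ h.2
    · exact h.2
  have hEcΩ'P : ∀ x, x ∉ E → x ∈ Ω' → ¬(u x = 1 ∨ (u x ≠ 0 ∧ g x ≤ 0)) := by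
    intro x hxE hxΩ h
    exact hxE (Or.inr ⟨hxΩ, h⟩)
  -- eventual positivity conditions
  have hUE : ∀ (y : EuclideanSpace ℝ (Fin n)) (δ : ℝ), 0 < δ → volume (E ∩ ball y δ) ≠ 0 →
      ∀ᶠ k in ↑U, volume (F k ∩ ball y δ) ≠ 0 := by
    intro y δ hδ hvol
    by_cases h1 : volume ((Eo \ Ω') ∩ ball y δ) = 0
    · have h2 : volume ((Ω' ∩ {x | u x = 1 ∨ (u x ≠ 0 ∧ g x ≤ 0)}) ∩ ball y δ) ≠ 0 := by
        intro h0
        apply hvol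
        refine measure_mono_null ?_ (measure_union_null h1 h0)
        rw [hE_def, union_inter_distrib_right]
      set A := Ω' ∩ ball y δ with hA_def
      have hAm : MeasurableSet A := hΩ'm.inter measurableSet_ball
      have hune : volume ({x | u x ≠ 0} ∩ A) ≠ 0 := by
        refine fun h0 => h2 (measure_mono_null ?_ h0)
        rintro x ⟨⟨hxΩ, hxP⟩, hxB⟩
        refine ⟨?_, hxΩ, hxB⟩
        rcases hxP with h | h
        · simp only [mem_setOf_eq, h]; exact one_ne_zero
        · exact h.1
      have hνA : ν A ≠ 0 := by
        intro h0
        have hl : ∫⁻ x in A, u x ∂volume = 0 := by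
          rw [Measure.setLIntegral_rnDeriv' hac hAm, h0]
        rw [lintegral_eq_zero_iff hum] at hl
        apply hune
        have h3 : (volume.restrict A) {x | u x ≠ 0} = 0 := by
          have := ae_iff.1 hl
          simpa using this
        rwa [Measure.restrict_apply (show MeasurableSet {x | u x ≠ 0} from
          (hum (measurableSet_singleton 0)).compl)] at h3
      filter_upwards [(hν A hAm).eventually_ne hνA] with k hk h0
      have hsub2 : S k ∩ A ⊆ F k ∩ ball y δ := by
        rintro x ⟨⟨hxF, hxΩ⟩, hxΩ2, hxB⟩
        exact ⟨hxF, hxB⟩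
      exact hk (measure_mono_null hsub2 h0)
    · refine Eventually.of_forall fun k h0 => h1 (measure_mono_null ?_ h0)
      exact inter_subset_inter_left _ (hEoF k)
  have hUEc : ∀ (y : EuclideanSpace ℝ (Fin n)) (δ : ℝ), 0 < δ → volume (Eᶜ ∩ ball y δ) ≠ 0 →
      ∀ᶠ k in ↑U, volume ((F k)ᶜ ∩ ball y δ) ≠ 0 := by
    intro y δ hδ hvol
    by_cases h1 : volume ((Eᶜ ∩ ball y δ) \ Ω') = 0
    · have h2 : volume ((Eᶜ ∩ ball y δ) ∩ Ω') ≠ 0 := by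
        intro h0
        apply hvol
        have : Eᶜ ∩ ball y δ = ((Eᶜ ∩ ball y δ) \ Ω') ∪ ((Eᶜ ∩ ball y δ) ∩ Ω') :=
          (diff_union_inter _ _).symm
        rw [this]
        exact measure_union_null h1 h0
      set A := Ω' ∩ ball y δ with hA_def
      have hAm : MeasurableSet A := hΩ'm.inter measurableSet_ball
      have hAfin : volume A ≠ ⊤ :=
        ((measure_mono inter_subset_left).trans_lt hΩ'f.lt_top).ne
      have hune : volume ({x | u x ≠ 1} ∩ A) ≠ 0 := by
        refine fun h0 => h2 (measure_mono_null ?_ h0)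
        rintro x ⟨⟨hxE, hxB⟩, hxΩ⟩
        refine ⟨fun h => hEcΩ'P x hxE hxΩ (Or.inl h), hxΩ, hxB⟩
      have hlt : ν A < volume A := by
        refine lt_of_le_of_ne (Measure.le_iff.1 hνle A hAm) ?_
        intro heq
        have hl1 : ∫⁻ x in A, u x ∂volume = ν A := Measure.setLIntegral_rnDeriv' hac hAm
        have hl2 : (∫⁻ x in A, (1 - u x) ∂volume) + ∫⁻ x in A, u x ∂volume = volume A := by
          rw [← lintegral_add_right _ hum]
          have hone : (fun x => (1 - u x) + u x) =ᵐ[volume.restrict A] fun _ => (1:ℝ≥0∞) := by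
            filter_upwards [ae_restrict_of_ae hule] with x hx
            exact tsub_add_cancel_of_le hx
          rw [lintegral_congr_ae hone, setLIntegral_one]
        rw [hl1, heq] at hl2
        have h0 : ∫⁻ x in A, (1 - u x) ∂volume = 0 := by
          have h' : (∫⁻ x in A, (1 - u x) ∂volume) + volume A = 0 + volume A := by
            rw [zero_add]; exact hl2
          exact (ENNReal.add_left_inj hAfin).1 h'
        rw [lintegral_eq_zero_iff (f := fun x => 1 - u x) (measurable_const.sub hum)] at h0
        apply hune
        have hae1 : ∀ᵐ x ∂volume.restrict A, u x = 1 := by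
          filter_upwards [h0, ae_restrict_of_ae hule] with x hx1 hx2
          have : (1:ℝ≥0∞) ≤ u x := tsub_eq_zero_iff_le.1 hx1
          exact le_antisymm hx2 this
        have h3 : (volume.restrict A) {x | u x ≠ 1} = 0 := by
          have := ae_iff.1 hae1
          simpa using this
        rwa [Measure.restrict_apply (show MeasurableSet {x | u x ≠ 1} from
          (hum (measurableSet_singleton 1)).compl)] at h3
      filter_upwards [(hν A hAm).eventually_lt_const hlt] with k hk h0
      have hsplit : volume (A ∩ F k) + volume (A \ F k) = volume A :=
        measure_inter_add_diff A (hFm k)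
      have hAF : A ∩ F k = S k ∩ A := by
        rw [hS_def]; ext x
        simp only [mem_inter_iff, hA_def]
        tauto
      have hdiff0 : volume (A \ F k) = 0 :=
        measure_mono_null (show A \ F k ⊆ (F k)ᶜ ∩ ball y δ from
          fun x hx => ⟨hx.2, hx.1.2⟩) h0
      rw [hAF, hdiff0, add_zero] at hsplit
      exact absurd hsplit (ne_of_lt hk)
    · refine Eventually.of_forall fun k h0 => h1 (measure_mono_null ?_ h0)
      rintro x ⟨⟨hxEc, hxB⟩, hxΩ⟩
      have hxEo : x ∉ Eo := by
        intro hxEo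
        exact hxEc (Or.inl ⟨hxEo, hxΩ⟩)
      refine ⟨?_, hxB⟩
      intro hxF
      have hmem : x ∈ F k \ Ω' := ⟨hxF, hxΩ⟩
      rw [hFb k] at hmem
      exact hxEo hmem.1
  -- the perimeter part: lower semicontinuity along the ultrafilter
  obtain ⟨pV, hpV⟩ := exists_ulim U
    (fun k => volume (thickening r (frontier (densityOnePoints n (F k))) ∩ Ω))
  have hpVle : pV ≤ volume Ω := le_of_tendsto hpV
    (Eventually.of_forall fun k => measure_mono inter_subset_right)
  have hper : volume (thickening r (frontier (densityOnePoints n E)) ∩ Ω) ≤ pV := by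
    rw [(isOpen_thickening.inter hΩo).measure_eq_iSup_isCompact]
    refine iSup_le fun K => iSup_le fun hK => iSup_le fun hKc => ?_
    have hxball : ∀ x ∈ K, ∃ η > 0, ∀ᶠ k in ↑U,
        ball x η ⊆ thickening r (frontier (densityOnePoints n (F k))) := by
      intro x hxK
      obtain ⟨hxT, hxΩ⟩ := hK hxK
      obtain ⟨y, hyf, hxy⟩ := mem_thickening_iff.1 hxT
      set δ := (r - dist x y)/2 with hδ_def
      have hδ : 0 < δ := by rw [hδ_def]; linarith
      have h1 : volume (E ∩ ball y δ) ≠ 0 :=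
        vol_pos_of_mem_closure_density hδ (frontier_subset_closure hyf)
      have h2 : volume (Eᶜ ∩ ball y δ) ≠ 0 := by
        refine vol_compl_pos_of_mem_closure_compl hEm hδ ?_
        rw [← frontier_compl] at hyf
        exact frontier_subset_closure hyf
      refine ⟨δ, hδ, ?_⟩
      filter_upwards [hUE y δ hδ h1, hUEc y δ hδ h2] with k hk1 hk2
      have hxyδ : dist x y + δ < r := by rw [hδ_def]; linarith
      have hkey := key_ball (hFm k) hk1 hk2 hxyδ
      have hδeq : r - dist x y - δ = δ := by rw [hδ_def]; ring
      rwa [hδeq] at hkey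
    choose! η hη hball using hxball
    obtain ⟨t, htcover⟩ := hKc.elim_nhds_subcover' (fun x _ => ball x (η x))
      (fun x hx => ball_mem_nhds x (hη x hx))
    have hev : ∀ᶠ k in ↑U, ∀ x ∈ t, ball (x : EuclideanSpace ℝ (Fin n)) (η x) ⊆
        thickening r (frontier (densityOnePoints n (F k))) := by
      rw [Filter.eventually_all_finset]
      intro x _
      exact hball x x.2
    refine ge_of_tendsto hpV ?_
    filter_upwards [hev] with k hk
    refine measure_mono ?_
    intro p hpK
    refine ⟨?_, (hK hpK).2⟩
    obtain ⟨x, hxt, hpx⟩ := mem_iUnion₂.1 (htcover hpK)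
    exact hk x hxt hpx
  -- the integral part
  have hglim := ulim_integral U volume S hSm Ω' hΩ'm hSΩ ν hν hνle g hgΩ'
  set w : EuclideanSpace ℝ (Fin n) → ℝ := fun x => min (u x).toReal 1 with hw_def
  set c0 := ∫ x in (Eo \ Ω') ∩ Ω, g x with hc0_def
  have hdecomp : ∀ (X : Set (EuclideanSpace ℝ (Fin n))), MeasurableSet X → X \ Ω' = Eo \ Ω' →
      ∫ x in X ∩ Ω, g x = c0 + ∫ x in X ∩ Ω', g x := by
    intro X hXm hXb
    have hXeq : X ∩ Ω = ((Eo \ Ω') ∩ Ω) ∪ (X ∩ Ω') := by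
      ext x
      constructor
      · rintro ⟨hxX, hxΩ⟩
        by_cases hx' : x ∈ Ω'
        · exact Or.inr ⟨hxX, hx'⟩
        · left
          have hx2 : x ∈ X \ Ω' := ⟨hxX, hx'⟩
          rw [hXb] at hx2
          exact ⟨hx2, hxΩ⟩
      · rintro (⟨hxEo, hxΩ⟩ | ⟨hxX, hxΩ'⟩)
        · rw [← hXb] at hxEo
          exact ⟨hxEo.1, hxΩ⟩
        · exact ⟨hxX, hΩ'sub hxΩ'⟩
    rw [hXeq, setIntegral_union ?_ (hXm.inter hΩ'm) (hg.mono_set inter_subset_right)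
      (hgΩ'.mono_set inter_subset_right)]
    rw [disjoint_left]
    rintro x ⟨hx1, -⟩ ⟨-, hx2⟩
    exact hx1.2 hx2
  -- limit of the energies of the minimizing sequence
  have hpVfin : pV / ENNReal.ofReal (2*r) ≠ ⊤ :=
    (ENNReal.div_lt_top (lt_of_le_of_lt hpVle hΩf.lt_top).ne h2r0).ne
  have hΦlim : Tendsto (fun k => (perR n r (F k) Ω).toReal + ∫ x in F k ∩ Ω, g x) ↑U
      (𝓝 ((pV / ENNReal.ofReal (2*r)).toReal + (c0 + ∫ x in Ω', g x * w x))) := by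
    have hperlim : Tendsto (fun k => (perR n r (F k) Ω).toReal) ↑U
        (𝓝 ((pV / ENNReal.ofReal (2*r)).toReal)) := by
      have hdiv : Tendsto (fun k =>
          volume (thickening r (frontier (densityOnePoints n (F k))) ∩ Ω) / ENNReal.ofReal (2*r))
          ↑U (𝓝 (pV / ENNReal.ofReal (2*r))) := ENNReal.Tendsto.div_const hpV (Or.inr h2r0)
      exact (ENNReal.tendsto_toReal hpVfin).comp hdiv
    have hIlim : Tendsto (fun k => ∫ x in F k ∩ Ω, g x) ↑U
        (𝓝 (c0 + ∫ x in Ω', g x * w x)) := by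
      have heq : ∀ k, ∫ x in F k ∩ Ω, g x = c0 + ∫ x in S k, g x := fun k =>
        hdecomp (F k) (hFm k) (hFb k)
      simp only [heq]
      exact tendsto_const_nhds.add hglim
    exact hperlim.add hIlim
  have hΦm : (pV / ENNReal.ofReal (2*r)).toReal + (c0 + ∫ x in Ω', g x * w x) ≤ m := by
    refine _root_.le_of_forall_pos_le_add ?_
    intro ε hε
    have hev : ∀ᶠ k in atTop, (perR n r (F k) Ω).toReal + ∫ x in F k ∩ Ω, g x ≤ m + ε := by
      have h1 : Tendsto (fun k : ℕ => 1/((k:ℝ)+1)) atTop (𝓝 0) :=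
        tendsto_one_div_add_atTop_nhds_zero_nat
      filter_upwards [h1.eventually (eventually_le_nhds hε)] with k hk
      exact (hFΦ k).le.trans (by linarith)
    exact le_of_tendsto hΦlim (hU hev)
  -- the candidate beats the limit
  have hperE : (perR n r E Ω).toReal ≤ (pV / ENNReal.ofReal (2*r)).toReal := by
    refine ENNReal.toReal_mono hpVfin ?_
    exact ENNReal.div_le_div_right hper _
  have hIE : ∫ x in E ∩ Ω, g x ≤ c0 + ∫ x in Ω', g x * w x := by
    rw [hdecomp E hEm hEb]
    refine (add_le_add_iff_left c0).2 ?_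
    have h1 : ∫ x in E ∩ Ω', g x = ∫ x in Ω', E.indicator g x := by
      rw [setIntegral_indicator hEm, inter_comm]
    rw [h1]
    have hwm : Measurable w := hum.ennreal_toReal.min measurable_const
    have hw0 : ∀ x, 0 ≤ w x := fun x => le_min ENNReal.toReal_nonneg zero_le_one
    have hw1 : ∀ x, w x ≤ 1 := fun x => min_le_right _ _
    have hint1 : Integrable (E.indicator g) (volume.restrict Ω') := hgΩ'.indicator hEm
    have hint2 : Integrable (fun x => g x * w x) (volume.restrict Ω') := by
      have := hgΩ'.bdd_mul hwm.aestronglyMeasurable (Eventually.of_forall fun x => by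
        rw [Real.norm_eq_abs, abs_of_nonneg (hw0 x)]; exact hw1 x)
      exact this.congr (Eventually.of_forall fun x => mul_comm _ _)
    refine integral_mono_ae hint1 hint2 ?_
    filter_upwards [ae_restrict_mem hΩ'm] with x hxΩ
    by_cases hxE : x ∈ E
    · rw [indicator_of_mem hxE]
      rcases hEΩ'P x hxE hxΩ with h | h
      · have hwx : w x = 1 := by rw [hw_def]; simp [h]
        rw [hwx, mul_one]
      · have h2 := hw1 x
        have h3 := hw0 x
        nlinarith [h.2]
    · rw [indicator_of_notMem hxE]
      have hnP := hEcΩ'P x hxE hxΩ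
      by_cases hu0 : u x = 0
      · have hwx : w x = 0 := by rw [hw_def]; simp [hu0]
        rw [hwx, mul_zero]
      · have hgpos : 0 < g x := by
          by_contra hgle
          exact hnP (Or.inr ⟨hu0, le_of_not_gt hgle⟩)
        exact mul_nonneg hgpos.le (hw0 x)
  refine ⟨E, hEm, hEb, fun Fc hFcm hFcb => ?_⟩
  calc (perR n r E Ω).toReal + ∫ x in E ∩ Ω, g x
      ≤ (pV / ENNReal.ofReal (2*r)).toReal + (c0 + ∫ x in Ω', g x * w x) :=
        add_le_add hperE hIE
    _ ≤ m := hΦm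
    _ ≤ (perR n r Fc Ω).toReal + ∫ x in Fc ∩ Ω, g x := hmle Fc hFcm hFcb

end Main

/-- Existence for the Dirichlet problem: given `Ω' ⋐ Ω` and exterior datum `E_o`, there is a
minimizer of `Per_r(·, Ω)` (and of `F_{r,g}(·, Ω)` for any locally integrable `g`) among
measurable sets coinciding with `E_o` outside `Ω'`. -/
theorem dirichlet_existence (n : ℕ) (r : ℝ) (hr : 0 < r)
    (Ω : Set (EuclideanSpace ℝ (Fin n))) (hΩo : IsOpen Ω) (hΩb : Bornology.IsBounded Ω)
    (Ω' : Set (EuclideanSpace ℝ (Fin n))) (hΩ'o : IsOpen Ω') (hΩ' : closure Ω' ⊆ Ω)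
    (Eo : Set (EuclideanSpace ℝ (Fin n))) (hEo : MeasurableSet Eo) :
    (∃ E : Set (EuclideanSpace ℝ (Fin n)), MeasurableSet E ∧ E \ Ω' = Eo \ Ω' ∧
      ∀ F : Set (EuclideanSpace ℝ (Fin n)), MeasurableSet F → F \ Ω' = Eo \ Ω' →
        perR n r E Ω ≤ perR n r F Ω) ∧
    ∀ g : EuclideanSpace ℝ (Fin n) → ℝ, LocallyIntegrable g volume →
      ∃ E : Set (EuclideanSpace ℝ (Fin n)), MeasurableSet E ∧ E \ Ω' = Eo \ Ω' ∧
        ∀ F : Set (EuclideanSpace ℝ (Fin n)), MeasurableSet F → F \ Ω' = Eo \ Ω' →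
          FRG n r g E Ω ≤ FRG n r g F Ω := by
  constructor
  · obtain ⟨E, hEm, hEb, hmin⟩ := exists_min r hr Ω Ω' Eo hΩo hΩb hΩ'o hΩ' hEo
      (fun _ => (0:ℝ)) measurable_const (integrableOn_zero)
    refine ⟨E, hEm, hEb, fun F hFm hFb => ?_⟩
    have h := hmin F hFm hFb
    simp only [integral_zero, add_zero] at h
    exact (ENNReal.toReal_le_toReal (perR_ne_top hr hΩb) (perR_ne_top hr hΩb)).1 h
  · intro g hg
    have hgs : AEStronglyMeasurable g volume := hg.aestronglyMeasurable
    have hg'm : Measurable (hgs.mk g) := hgs.stronglyMeasurable_mk.measurable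
    have hgg' : g =ᵐ[volume] hgs.mk g := hgs.ae_eq_mk
    have hΩc : IsCompact (closure Ω) :=
      Metric.isCompact_of_isClosed_isBounded isClosed_closure hΩb.closure
    have hgΩ : IntegrableOn g Ω := (hg.integrableOn_isCompact hΩc).mono_set subset_closure
    have hg'Ω : IntegrableOn (hgs.mk g) Ω := hgΩ.congr (ae_restrict_of_ae hgg')
    obtain ⟨E, hEm, hEb, hmin⟩ := exists_min r hr Ω Ω' Eo hΩo hΩb hΩ'o hΩ' hEo
      (hgs.mk g) hg'm hg'Ω
    refine ⟨E, hEm, hEb, fun F hFm hFb => ?_⟩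
    have hkey := hmin F hFm hFb
    have hint : ∀ X : Set (EuclideanSpace ℝ (Fin n)),
        ∫ x in X ∩ Ω, g x = ∫ x in X ∩ Ω, hgs.mk g x := fun X =>
      integral_congr_ae (ae_restrict_of_ae hgg')
    have hcoe : ∀ X : Set (EuclideanSpace ℝ (Fin n)),
        ((perR n r X Ω : ℝ≥0∞) : EReal) = (((perR n r X Ω).toReal : ℝ) : EReal) := by
      intro X
      conv_lhs => rw [← ENNReal.ofReal_toReal (perR_ne_top hr hΩb (E := X))]
      rw [EReal.coe_ennreal_ofReal, max_eq_left ENNReal.toReal_nonneg]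
    rw [FRG, FRG, hint E, hint F, hcoe E, hcoe F, ← EReal.coe_add, ← EReal.coe_add,
      EReal.coe_le_coe_iff]
    exact hkey
end
end

section
/- Half-spaces are Class A minimizers: let n ≥ 1, r > 0, let ω ∈ ℝⁿ with ω ≠ 0, and let E := {x ∈ ℝⁿ : x · ω < 0}. Then E is a Class A minimizer for Per_r, i.e. for every open ball B ⊆ ℝⁿ and every measurable F ⊆ ℝⁿ with F \ (B ⊖ B_r) = E \ (B ⊖ B_r), one has Per_r(E, B) ≤ Per_r(F, B). -/
open MeasureTheory Metric Set Filter Topology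
open scoped RealInnerProductSpace ENNReal

noncomputable section

/-- The inner domain `D ⊖ B_r = {x ∈ D : dist(x, ∂D) ≥ r}`. -/
def innerDomain (n : ℕ) (r : ℝ) (D : Set (EuclideanSpace ℝ (Fin n))) :
    Set (EuclideanSpace ℝ (Fin n)) :=
  {x ∈ D | r ≤ Metric.infDist x (frontier D)}

/-- `E` is a minimizer of `Per_r` in `D`: it minimizes among measurable competitors that
coincide with `E` outside `D ⊖ B_r`. -/
def IsMinimizerPerR (n : ℕ) (r : ℝ) (E D : Set (EuclideanSpace ℝ (Fin n))) : Prop :=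
  ∀ F : Set (EuclideanSpace ℝ (Fin n)), MeasurableSet F →
    F \ innerDomain n r D = E \ innerDomain n r D → perR n r E D ≤ perR n r F D

namespace HalfspaceProof

theorem exists_mem_frontier_of_isPreconnected {X : Type*} [TopologicalSpace X]
    {s A : Set X} (hs : IsPreconnected s) {a b : X} (has : a ∈ s) (hbs : b ∈ s)
    (haA : a ∈ A) (hbA : b ∉ A) : ∃ w ∈ s, w ∈ frontier A := by
  by_contra h
  push_neg at h
  have hsub : s ⊆ interior A ∪ (closure A)ᶜ := by
    intro y hy
    by_cases hc : y ∈ closure A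
    · left
      by_contra hi
      exact h y hy ⟨hc, hi⟩
    · right; exact hc
  rcases hs.subset_or_subset isOpen_interior isClosed_closure.isOpen_compl
      (disjoint_compl_right.mono_left interior_subset_closure) hsub with h1 | h1
  · exact hbA (interior_subset (h1 hbs))
  · exact h1 has (subset_closure haA)

variable {k : ℕ}

local notation "Eu" => EuclideanSpace ℝ (Fin (k + 1))

theorem frontier_halfspace (u : Eu) (hu : u ≠ 0) :
    frontier {y : Eu | ⟪y, u⟫ < 0} = {y : Eu | ⟪y, u⟫ = 0} := by
  have h0 : ⟪u, u⟫ ≠ (0 : ℝ) := inner_self_ne_zero.2 hu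
  have hsurj : Function.Surjective (innerSL ℝ u) := by
    intro c
    refine ⟨(c / ⟪u, u⟫) • u, ?_⟩
    have : (innerSL ℝ u) ((c / ⟪u, u⟫) • u) = ⟪u, (c / ⟪u, u⟫) • u⟫ := rfl
    rw [this, real_inner_smul_right, div_mul_cancel₀ _ h0]
  have hopen : IsOpenMap (innerSL ℝ u) := ContinuousLinearMap.isOpenMap _ hsurj
  have hset : {y : Eu | ⟪y, u⟫ < 0} = (innerSL ℝ u) ⁻¹' (Iio 0) := by
    ext y
    have : (innerSL ℝ u) y = ⟪y, u⟫ := by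
      rw [show ((innerSL ℝ) u) y = ⟪u, y⟫ from rfl, real_inner_comm]
    simp only [mem_setOf_eq, mem_preimage, mem_Iio, this]
  rw [hset, ← hopen.preimage_frontier_eq_frontier_preimage (innerSL ℝ u).continuous,
    frontier_Iio]
  ext y
  have : (innerSL ℝ u) y = ⟪y, u⟫ := by
    rw [show ((innerSL ℝ) u) y = ⟪u, y⟫ from rfl, real_inner_comm]
  simp only [mem_preimage, mem_singleton_iff, mem_setOf_eq, this]

theorem thickening_hyperplane {r : ℝ} (u : Eu) (hu : ‖u‖ = 1) :
    thickening r {y : Eu | ⟪y, u⟫ = 0} = {y : Eu | |⟪y, u⟫| < r} := by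
  ext y
  rw [mem_thickening_iff]
  constructor
  · rintro ⟨z, hz, hd⟩
    have hz' : ⟪z, u⟫ = 0 := hz
    have h1 : ⟪y - z, u⟫ = ⟪y, u⟫ := by rw [inner_sub_left, hz', sub_zero]
    have h2 : |⟪y - z, u⟫| ≤ ‖y - z‖ * ‖u‖ := abs_real_inner_le_norm _ _
    show |⟪y, u⟫| < r
    rw [← h1]
    calc |⟪y - z, u⟫| ≤ ‖y - z‖ * ‖u‖ := h2
      _ = dist y z := by rw [hu, mul_one, dist_eq_norm]
      _ < r := hd
  · intro hy
    refine ⟨y - ⟪y, u⟫ • u, ?_, ?_⟩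
    · show ⟪y - ⟪y, u⟫ • u, u⟫ = 0
      rw [inner_sub_left, real_inner_smul_left, real_inner_self_eq_norm_sq, hu]
      ring
    · rw [dist_eq_norm]
      rw [sub_sub_cancel, norm_smul, hu, mul_one, Real.norm_eq_abs]
      exact hy

theorem infDist_sphere (u : Eu) (hu : ‖u‖ = 1) (x y : Eu) {ρ : ℝ} (hρ : 0 < ρ)
    (hy : dist y x < ρ) : infDist y (sphere x ρ) = ρ - dist y x := by
  have hmemu : x + ρ • u ∈ sphere x ρ := by
    rw [mem_sphere, dist_eq_norm, add_sub_cancel_left, norm_smul, Real.norm_eq_abs,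
      abs_of_pos hρ, hu, mul_one]
  apply le_antisymm
  · by_cases hyx : y = x
    · rw [hyx, dist_self, sub_zero]
      have hd : dist x (x + ρ • u) = ρ := by
        rw [dist_eq_norm]
        have : x - (x + ρ • u) = -(ρ • u) := by abel
        rw [this, norm_neg, norm_smul, Real.norm_eq_abs, abs_of_pos hρ, hu, mul_one]
      calc infDist x (sphere x ρ) ≤ dist x (x + ρ • u) := infDist_le_dist_of_mem hmemu
        _ = ρ := hd
    · set d := dist y x with hd
      have hd0 : 0 < d := dist_pos.2 hyx
      have hnorm : ‖y - x‖ = d := by rw [hd, dist_eq_norm]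
      have hmem : x + (ρ / d) • (y - x) ∈ sphere x ρ := by
        rw [mem_sphere, dist_eq_norm, add_sub_cancel_left, norm_smul, Real.norm_eq_abs,
          abs_of_pos (by positivity), hnorm]
        field_simp
      have hdist : dist y (x + (ρ / d) • (y - x)) = ρ - d := by
        rw [dist_eq_norm]
        have h3 : y - (x + (ρ / d) • (y - x)) = (1 - ρ / d) • (y - x) := by
          rw [sub_smul, one_smul]
          abel
        rw [h3, norm_smul, Real.norm_eq_abs, hnorm,
          abs_of_nonpos (by rw [sub_nonpos, le_div_iff₀ hd0]; linarith)]
        field_simp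
        ring
      calc infDist y (sphere x ρ) ≤ dist y (x + (ρ / d) • (y - x)) :=
            infDist_le_dist_of_mem hmem
        _ = ρ - d := hdist
  · by_contra hlt
    push_neg at hlt
    obtain ⟨z, hz, hzd⟩ := (infDist_lt_iff ⟨_, hmemu⟩).1 hlt
    have hz' : dist z x = ρ := hz
    have := dist_triangle z y x
    rw [dist_comm z y] at this
    linarith


theorem densityOnePoints_halfspace (u : Eu) (hu : ‖u‖ = 1) :
    densityOnePoints (k + 1) {y : Eu | ⟪y, u⟫ < 0} = {y : Eu | ⟪y, u⟫ < 0} := by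
  have hEopen : IsOpen {y : Eu | ⟪y, u⟫ < 0} := by
    have hc : Continuous fun y : Eu => ⟪y, u⟫ := continuous_id.inner continuous_const
    exact isOpen_lt hc continuous_const
  ext y
  simp only [densityOnePoints, mem_setOf_eq]
  constructor
  · intro hy
    by_contra hyE
    push_neg at hyE
    set q : ℝ≥0∞ := ENNReal.ofReal ((1 / 2) ^ (k + 1)) with hq
    have hq1 : q ≤ 1 := by
      rw [hq]
      exact ENNReal.ofReal_le_one.2 (pow_le_one₀ (by norm_num) (by norm_num))
    have hq0 : q ≠ 0 := (ENNReal.ofReal_pos.2 (by positivity)).ne'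
    have hbound : ∀ ρ' : ℝ, 0 < ρ' →
        volume ({w : Eu | ⟪w, u⟫ < 0} ∩ ball y ρ') / volume (ball y ρ') ≤ 1 - q := by
      intro ρ' hρ'
      set z := y + (ρ' / 2) • u with hz
      have hzy : dist z y = ρ' / 2 := by
        rw [dist_eq_norm, hz, add_sub_cancel_left, norm_smul, Real.norm_eq_abs,
          abs_of_pos (by positivity), hu, mul_one]
      have hsub : ball z (ρ' / 2) ⊆ ball y ρ' := by
        intro w hw
        rw [mem_ball] at hw ⊢
        have h3 := dist_triangle w z y
        linarith [hw, hzy]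
      have hdisj : Disjoint ({w : Eu | ⟪w, u⟫ < 0} ∩ ball y ρ') (ball z (ρ' / 2)) := by
        rw [Set.disjoint_left]
        rintro w ⟨hw1, _⟩ hw2
        have hw1' : ⟪w, u⟫ < 0 := hw1
        have h3 : |⟪w - z, u⟫| ≤ ‖w - z‖ := by
          have h4 := abs_real_inner_le_norm (w - z) u
          rwa [hu, mul_one] at h4
        have h4 : ‖w - z‖ < ρ' / 2 := by rw [← dist_eq_norm]; exact mem_ball.1 hw2
        have h5 : ⟪w - z, u⟫ = ⟪w, u⟫ - ⟪y, u⟫ - ρ' / 2 := by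
          rw [inner_sub_left, hz, inner_add_left, real_inner_smul_left,
            real_inner_self_eq_norm_sq, hu]
          ring
        have h6 : -(ρ' / 2) < ⟪w - z, u⟫ := by
          have := abs_lt.1 (lt_of_le_of_lt h3 h4)
          exact this.1
        rw [h5] at h6
        linarith
      have hfr : (Module.finrank ℝ (EuclideanSpace ℝ (Fin (k + 1)))) = k + 1 :=
        finrank_euclideanSpace_fin
      have hvol_z : volume (ball z (ρ' / 2)) = q * volume (ball y ρ') := by
        rw [Measure.addHaar_ball_of_pos volume z (by positivity : (0:ℝ) < ρ' / 2),
          Measure.addHaar_ball_of_pos volume y hρ', hfr, ← mul_assoc]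
        congr 1
        rw [hq, ← ENNReal.ofReal_mul (by positivity)]
        congr 1
        ring
      have hle : volume ({w : Eu | ⟪w, u⟫ < 0} ∩ ball y ρ') + q * volume (ball y ρ')
          ≤ volume (ball y ρ') := by
        rw [← hvol_z, ← measure_union hdisj measurableSet_ball]
        exact measure_mono (union_subset inter_subset_right hsub)
      have hqV : q * volume (ball y ρ') ≠ ⊤ :=
        ENNReal.mul_ne_top (lt_of_le_of_lt hq1 ENNReal.one_lt_top).ne measure_ball_lt_top.ne
      have hsplit : (1 - q) * volume (ball y ρ') + q * volume (ball y ρ')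
          = volume (ball y ρ') := by
        rw [← add_mul, tsub_add_cancel_of_le hq1, one_mul]
      have hle2 : volume ({w : Eu | ⟪w, u⟫ < 0} ∩ ball y ρ')
          ≤ (1 - q) * volume (ball y ρ') := by
        have hle' : volume ({w : Eu | ⟪w, u⟫ < 0} ∩ ball y ρ') + q * volume (ball y ρ')
            ≤ (1 - q) * volume (ball y ρ') + q * volume (ball y ρ') := by
          rw [hsplit]; exact hle
        exact (ENNReal.add_le_add_iff_right hqV).1 hle'
      exact ENNReal.div_le_of_le_mul hle2
    have hev : ∀ᶠ ρ' in 𝓝[>] (0:ℝ),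
        volume ({w : Eu | ⟪w, u⟫ < 0} ∩ ball y ρ') / volume (ball y ρ') ≤ 1 - q := by
      filter_upwards [self_mem_nhdsWithin] with ρ' hρ' using hbound ρ' hρ'
    have h1 := le_of_tendsto hy hev
    have h2 : (1 : ℝ≥0∞) - q < 1 := ENNReal.sub_lt_self ENNReal.one_ne_top one_ne_zero hq0
    exact absurd h1 (not_le.2 h2)
  · intro hy
    obtain ⟨ε, hε, hball⟩ := Metric.isOpen_iff.1 hEopen y hy
    have hev : ∀ᶠ ρ' in 𝓝[>] (0:ℝ),
        volume ({w : Eu | ⟪w, u⟫ < 0} ∩ ball y ρ') / volume (ball y ρ') = 1 := by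
      filter_upwards [Ioo_mem_nhdsGT_of_mem ⟨le_refl (0:ℝ), hε⟩] with ρ' hρ'
      rw [inter_eq_right.2 fun z hz => hball (ball_subset_ball hρ'.2.le hz)]
      exact ENNReal.div_self (measure_ball_pos volume y hρ'.1).ne' measure_ball_lt_top.ne
    exact Tendsto.congr' (hev.mono fun a ha => ha.symm) tendsto_const_nhds

theorem innerDomain_ball (u : Eu) (hu : ‖u‖ = 1) {r ρ : ℝ} (hr : 0 < r) (hρ : 0 < ρ)
    (x : Eu) : innerDomain (k + 1) r (ball x ρ) = closedBall x (ρ - r) := by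
  have hnt : (ρ : ℝ) ≠ 0 := hρ.ne'
  have hfr : frontier (ball x ρ) = sphere x ρ := frontier_ball x hnt
  ext y
  simp only [innerDomain, mem_setOf_eq, mem_ball, mem_closedBall, hfr]
  constructor
  · rintro ⟨h1, h2⟩
    rw [infDist_sphere u hu x y hρ h1] at h2
    linarith
  · intro h
    have h1 : dist y x < ρ := lt_of_le_of_lt h (by linarith)
    exact ⟨h1, by rw [infDist_sphere u hu x y hρ h1]; linarith⟩


def psi (b : OrthonormalBasis (Fin (k + 1)) ℝ Eu) (q : (Fin k → ℝ) × ℝ) : Eu :=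
  b.repr.symm ((MeasurableEquiv.toLp 2 (Fin (k + 1) → ℝ)) (Fin.insertNth 0 q.2 q.1))

theorem psi_repr (b : OrthonormalBasis (Fin (k + 1)) ℝ Eu) (p : Fin k → ℝ) (t : ℝ)
    (i : Fin (k + 1)) : b.repr (psi b (p, t)) i = Fin.insertNth (α := fun _ => ℝ) 0 t p i := by
  rw [psi, LinearIsometryEquiv.apply_symm_apply]
  rfl

theorem psi_inner_zero (b : OrthonormalBasis (Fin (k + 1)) ℝ Eu) (p : Fin k → ℝ) (t : ℝ) :
    ⟪psi b (p, t), b 0⟫ = t := by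
  rw [real_inner_comm, ← OrthonormalBasis.repr_apply_apply, psi_repr,
    Fin.insertNth_apply_same]

theorem psi_sub (b : OrthonormalBasis (Fin (k + 1)) ℝ Eu) (p : Fin k → ℝ) (s t : ℝ) :
    psi b (p, t) - psi b (p, s) = (t - s) • b 0 := by
  apply b.repr.injective
  rw [map_sub, _root_.map_smul, OrthonormalBasis.repr_self]
  ext i
  induction i using Fin.cases with
  | zero =>
      simp only [PiLp.sub_apply, PiLp.smul_apply, psi_repr, Fin.insertNth_apply_same,
        EuclideanSpace.single_apply, if_pos rfl, smul_eq_mul, mul_one]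
      simp
  | succ j =>
      have h1 : (Fin.succ j : Fin (k + 1)) = (0 : Fin (k + 1)).succAbove j := by
        rw [Fin.succAbove_zero]
      simp only [PiLp.sub_apply, PiLp.smul_apply, psi_repr, h1,
        Fin.insertNth_apply_succAbove, EuclideanSpace.single_apply, smul_eq_mul]
      rw [if_neg (by simp [Fin.succ_ne_zero, ← h1]), sub_self, mul_zero]

theorem psi_dist (b : OrthonormalBasis (Fin (k + 1)) ℝ Eu) (p : Fin k → ℝ) (s t : ℝ) :
    dist (psi b (p, t)) (psi b (p, s)) = |t - s| := by
  rw [dist_eq_norm, psi_sub, norm_smul, Real.norm_eq_abs, b.orthonormal.1 0, mul_one]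

theorem psi_recon (b : OrthonormalBasis (Fin (k + 1)) ℝ Eu) (y : Eu) :
    psi b (fun j => b.repr y (Fin.succ j), ⟪y, b 0⟫) = y := by
  apply b.repr.injective
  ext i
  induction i using Fin.cases with
  | zero =>
      rw [psi_repr, Fin.insertNth_apply_same, real_inner_comm,
        ← OrthonormalBasis.repr_apply_apply]
  | succ j =>
      have h1 : (Fin.succ j : Fin (k + 1)) = (0 : Fin (k + 1)).succAbove j := by
        rw [Fin.succAbove_zero]
      rw [psi_repr, h1, Fin.insertNth_apply_succAbove, ← h1]

theorem psi_measurePreserving (b : OrthonormalBasis (Fin (k + 1)) ℝ Eu) :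
    MeasurePreserving (psi b)
      ((volume : Measure (Fin k → ℝ)).prod (volume : Measure ℝ)) (volume : Measure Eu) := by
  have h1 : MeasurePreserving (Prod.swap : (Fin k → ℝ) × ℝ → ℝ × (Fin k → ℝ))
      ((volume : Measure (Fin k → ℝ)).prod (volume : Measure ℝ))
      ((volume : Measure ℝ).prod (volume : Measure (Fin k → ℝ))) :=
    Measure.measurePreserving_swap
  have h2 : MeasurePreserving
      (MeasurableEquiv.piFinSuccAbove (fun _ : Fin (k + 1) => ℝ) 0).symm
      ((volume : Measure ℝ).prod (volume : Measure (Fin k → ℝ)))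
      (volume : Measure (Fin (k + 1) → ℝ)) :=
    (volume_preserving_piFinSuccAbove (fun _ : Fin (k + 1) => ℝ) 0).symm
  have h3 := (EuclideanSpace.volume_preserving_symm_measurableEquiv_toLp (Fin (k + 1))).symm
  have h4 := b.measurePreserving_repr_symm
  have hcomp := h4.comp (h3.comp (h2.comp h1))
  have hfun : psi b = ⇑b.repr.symm ∘ (⇑(MeasurableEquiv.toLp 2 (Fin (k + 1) → ℝ)) ∘
      (⇑(MeasurableEquiv.piFinSuccAbove (fun _ : Fin (k + 1) => ℝ) 0).symm ∘ Prod.swap)) := by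
    funext q
    rfl
  rw [hfun]
  exact hcomp


end HalfspaceProof

open HalfspaceProof

/-- Half-spaces are Class A minimizers for `Per_r`: the half-space `{x · ω < 0}` is a
minimizer of `Per_r` in every open ball of `ℝⁿ`. -/
theorem halfspace_classA (n : ℕ) (hn : 1 ≤ n) (r : ℝ) (hr : 0 < r)
    (ω : EuclideanSpace ℝ (Fin n)) (hω : ω ≠ 0) :
    ∀ (x : EuclideanSpace ℝ (Fin n)) (ρ : ℝ), 0 < ρ →
      IsMinimizerPerR n r {y : EuclideanSpace ℝ (Fin n) | ⟪y, ω⟫ < 0} (ball x ρ) := by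
  obtain ⟨k, rfl⟩ : ∃ k, n = k + 1 := ⟨n - 1, (Nat.succ_pred_eq_of_pos hn).symm⟩
  intro x ρ hρ F hFmeas hF
  have hnω : (0:ℝ) < ‖ω‖ := norm_pos_iff.2 hω
  set u : EuclideanSpace ℝ (Fin (k + 1)) := ‖ω‖⁻¹ • ω with hudef
  have hu : ‖u‖ = 1 := by
    rw [hudef, norm_smul, Real.norm_eq_abs, abs_of_pos (inv_pos.2 hnω),
      inv_mul_cancel₀ hnω.ne']
  have hu0 : u ≠ 0 := by
    intro h
    rw [h, norm_zero] at hu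
    exact one_ne_zero hu.symm
  have huω : ∀ y : EuclideanSpace ℝ (Fin (k + 1)), ⟪y, u⟫ = ‖ω‖⁻¹ * ⟪y, ω⟫ := fun y => by
    rw [hudef, real_inner_smul_right]
  have hEeq : {y : EuclideanSpace ℝ (Fin (k + 1)) | ⟪y, ω⟫ < 0}
      = {y : EuclideanSpace ℝ (Fin (k + 1)) | ⟪y, u⟫ < 0} := by
    ext y
    simp only [mem_setOf_eq, huω]
    constructor
    · intro h; exact mul_neg_of_pos_of_neg (inv_pos.2 hnω) h
    · intro h; nlinarith [inv_pos.2 hnω]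
  rw [hEeq] at hF ⊢
  rw [innerDomain_ball u hu hr hρ x] at hF
  set E : Set (EuclideanSpace ℝ (Fin (k + 1))) :=
    {y : EuclideanSpace ℝ (Fin (k + 1)) | ⟪y, u⟫ < 0} with hEdef
  set K : Set (EuclideanSpace ℝ (Fin (k + 1))) := closedBall x (ρ - r) with hKdef
  have hdensE : densityOnePoints (k + 1) E = E := densityOnePoints_halfspace u hu
  have hfrE : frontier E = {y : EuclideanSpace ℝ (Fin (k + 1)) | ⟪y, u⟫ = 0} :=
    frontier_halfspace u hu0
  set S : Set (EuclideanSpace ℝ (Fin (k + 1))) :=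
    {y : EuclideanSpace ℝ (Fin (k + 1)) | |⟪y, u⟫| < r} with hSdef
  have hSthick : thickening r {y : EuclideanSpace ℝ (Fin (k + 1)) | ⟪y, u⟫ = 0} = S :=
    thickening_hyperplane u hu
  have hFE : ∀ y, y ∉ K → (y ∈ F ↔ y ∈ E) := by
    intro y hy
    constructor
    · intro h
      have h2 : y ∈ F \ K := ⟨h, hy⟩
      rw [hF] at h2; exact h2.1
    · intro h
      have h2 : y ∈ E \ K := ⟨h, hy⟩
      rw [← hF] at h2; exact h2.1
  have hKopenc : IsOpen Kᶜ := Metric.isClosed_closedBall.isOpen_compl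
  set Fs : Set (EuclideanSpace ℝ (Fin (k + 1))) := densityOnePoints (k + 1) F with hFsdef
  have hFstar : ∀ y, y ∉ K → (y ∈ Fs ↔ y ∈ E) := by
    intro y hy
    obtain ⟨δ, hδ, hballδ⟩ := Metric.isOpen_iff.1 hKopenc y hy
    have hev : ∀ᶠ ρ' in 𝓝[>] (0:ℝ),
        volume (F ∩ ball y ρ') / volume (ball y ρ')
          = volume (E ∩ ball y ρ') / volume (ball y ρ') := by
      filter_upwards [Ioo_mem_nhdsGT_of_mem ⟨le_refl (0:ℝ), hδ⟩] with ρ' hρ'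
      have heq : F ∩ ball y ρ' = E ∩ ball y ρ' := by
        ext z
        constructor
        · rintro ⟨h1, h2⟩
          exact ⟨(hFE z (hballδ (ball_subset_ball hρ'.2.le h2))).1 h1, h2⟩
        · rintro ⟨h1, h2⟩
          exact ⟨(hFE z (hballδ (ball_subset_ball hρ'.2.le h2))).2 h1, h2⟩
      rw [heq]
    have h1 : (y ∈ Fs) ↔ (y ∈ densityOnePoints (k + 1) E) := by
      simp only [hFsdef, densityOnePoints, mem_setOf_eq]
      exact tendsto_congr' hev
    rw [h1, hdensE]
  have hH' : ∀ y, y ∈ frontier Fs → y ∉ K → ⟪y, u⟫ = 0 := by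
    intro y hyfr hyK
    obtain ⟨δ, hδ, hballδ⟩ := Metric.isOpen_iff.1 hKopenc y hyK
    have hloc : ∀ z, z ∈ ball y δ → (z ∈ Fs ↔ z ∈ E) := fun z hz => hFstar z (hballδ hz)
    have hyc : y ∈ closure E := by
      rw [Metric.mem_closure_iff]
      intro ε hε
      obtain ⟨z, hz1, hz2⟩ := Metric.mem_closure_iff.1 hyfr.1 (min ε δ) (lt_min hε hδ)
      refine ⟨z, ?_, hz2.trans_le (min_le_left _ _)⟩
      exact (hloc z (mem_ball'.2 (hz2.trans_le (min_le_right _ _)))).1 hz1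
    have hyi : y ∉ interior E := by
      intro hyint
      obtain ⟨ε, hε, hballε⟩ := Metric.isOpen_iff.1 isOpen_interior y hyint
      have hsubFs : ball y (min ε δ) ⊆ Fs := by
        intro z hz
        have hzE : z ∈ E := interior_subset (hballε (ball_subset_ball (min_le_left _ _) hz))
        exact (hloc z (ball_subset_ball (min_le_right _ _) hz)).2 hzE
      exact hyfr.2 (mem_interior.2
        ⟨ball y (min ε δ), hsubFs, isOpen_ball, mem_ball_self (lt_min hε hδ)⟩)
    have hfr : y ∈ frontier E := ⟨hyc, hyi⟩
    rw [hfrE] at hfr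
    exact hfr
  -- orthonormal basis adapted to u
  have hcard : Module.finrank ℝ (EuclideanSpace ℝ (Fin (k + 1))) = Fintype.card (Fin (k + 1)) := by
    rw [finrank_euclideanSpace_fin, Fintype.card_fin]
  have horth : Orthonormal ℝ (Set.restrict ({0} : Set (Fin (k + 1))) fun _ => u) := by
    constructor
    · intro i; exact hu
    · intro i j hij
      exfalso
      apply hij
      apply Subtype.ext
      have hi := i.2
      have hj := j.2
      simp only [mem_singleton_iff] at hi hj
      rw [hi, hj]
  obtain ⟨b, hb⟩ := horth.exists_orthonormalBasis_extension_of_card_eq hcard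
  have hb0' : b 0 = u := hb 0 rfl
  set Ψ : (Fin k → ℝ) × ℝ → EuclideanSpace ℝ (Fin (k + 1)) := psi b with hΨdef
  have hcoordu : ∀ p t, ⟪Ψ (p, t), u⟫ = t := by
    intro p t
    rw [← hb0']
    exact psi_inner_zero b p t
  have hdistΨ : ∀ (p : Fin k → ℝ) (s t : ℝ), dist (Ψ (p, t)) (Ψ (p, s)) = |t - s| :=
    fun p s t => psi_dist b p s t
  have hlower : ∀ (p : Fin k → ℝ) (t : ℝ) (w : EuclideanSpace ℝ (Fin (k + 1))),
      |t - ⟪w, u⟫| ≤ dist (Ψ (p, t)) w := by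
    intro p t w
    have h1 : ⟪Ψ (p, t) - w, u⟫ = t - ⟪w, u⟫ := by rw [inner_sub_left, hcoordu]
    have h2 := abs_real_inner_le_norm (Ψ (p, t) - w) u
    rw [h1, hu, mul_one] at h2
    rw [dist_eq_norm]
    exact h2
  set π : EuclideanSpace ℝ (Fin (k + 1)) → (Fin k → ℝ) :=
    fun y j => b.repr y (Fin.succ j) with hπdef
  have hπcont : Continuous π :=
    continuous_pi fun j => (continuous_apply _).comp ((PiLp.continuous_ofLp 2 _).comp b.repr.continuous)
  set P : Set (Fin k → ℝ) := π '' (frontier Fs ∩ K) with hPdef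
  have hPmeas : MeasurableSet P :=
    (((isCompact_closedBall x (ρ - r)).inter_left isClosed_frontier).image hπcont).measurableSet
  have hπΨ : ∀ p t, π (Ψ (p, t)) = p := by
    intro p t
    funext j
    have h1 : (Fin.succ j : Fin (k + 1)) = (0 : Fin (k + 1)).succAbove j := by
      rw [Fin.succAbove_zero]
    show b.repr (psi b (p, t)) (Fin.succ j) = p j
    rw [psi_repr, h1, Fin.insertNth_apply_succAbove]
  have hPmem : ∀ p t, Ψ (p, t) ∈ frontier Fs ∩ K → p ∈ P := by
    intro p t h
    exact ⟨Ψ (p, t), h, hπΨ p t⟩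
  have hPrev : ∀ p ∈ P, ∃ t, Ψ (p, t) ∈ frontier Fs ∩ K := by
    rintro p ⟨y, hy, rfl⟩
    refine ⟨⟪y, b 0⟫, ?_⟩
    have hrec : Ψ (π y, ⟪y, b 0⟫) = y := psi_recon b y
    rw [hrec]
    exact hy
  have hslice : ∀ p : Fin k → ℝ,
      volume {t : ℝ | Ψ (p, t) ∈ S ∩ ball x ρ}
        ≤ volume {t : ℝ | Ψ (p, t) ∈ thickening r (frontier Fs) ∩ ball x ρ} := by
    intro p
    by_cases hp : p ∈ P
    · obtain ⟨t₀, ht₀⟩ := hPrev p hp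
      have hsub1 : {t : ℝ | Ψ (p, t) ∈ S ∩ ball x ρ} ⊆ Ioo (-r) r := by
        intro t ht
        have h1 : |⟪Ψ (p, t), u⟫| < r := ht.1
        rw [hcoordu] at h1
        have h2 := abs_lt.1 h1
        exact ⟨h2.1, h2.2⟩
      have hsub2 : Ioo (t₀ - r) (t₀ + r)
          ⊆ {t : ℝ | Ψ (p, t) ∈ thickening r (frontier Fs) ∩ ball x ρ} := by
        intro s hs
        have habs : |s - t₀| < r := abs_lt.2 ⟨by linarith [hs.1], by linarith [hs.2]⟩
        constructor
        · exact mem_thickening_iff.2 ⟨Ψ (p, t₀), ht₀.1, by rw [hdistΨ]; exact habs⟩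
        · have h2 : dist (Ψ (p, t₀)) x ≤ ρ - r := mem_closedBall.1 ht₀.2
          have h3 := dist_triangle (Ψ (p, s)) (Ψ (p, t₀)) x
          have h4 : dist (Ψ (p, s)) (Ψ (p, t₀)) < r := by rw [hdistΨ]; exact habs
          rw [mem_ball]
          linarith
      calc volume {t : ℝ | Ψ (p, t) ∈ S ∩ ball x ρ} ≤ volume (Ioo (-r) r) :=
            measure_mono hsub1
        _ = ENNReal.ofReal (2 * r) := by rw [Real.volume_Ioo]; congr 1; ring
        _ = volume (Ioo (t₀ - r) (t₀ + r)) := by rw [Real.volume_Ioo]; congr 1; ring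
        _ ≤ volume {t : ℝ | Ψ (p, t) ∈ thickening r (frontier Fs) ∩ ball x ρ} :=
            measure_mono hsub2
    · have hΨ0 : Ψ (p, 0) ∈ frontier Fs := by
        set M : ℝ := |⟪x, u⟫| + ρ + 1 with hM
        have hxa := le_abs_self ⟪x, u⟫
        have hxb := neg_abs_le ⟪x, u⟫
        have hfar : ∀ t : ℝ, ρ - r < |t - ⟪x, u⟫| → Ψ (p, t) ∉ K := by
          intro t ht hmem
          have h1 := hlower p t x
          have h2 : dist (Ψ (p, t)) x ≤ ρ - r := mem_closedBall.1 hmem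
          linarith
        have hfm : ρ - r < |(-M) - ⟪x, u⟫| := by
          have h1 : ρ + 1 ≤ -((-M) - ⟪x, u⟫) := by rw [hM]; linarith
          have h2 := neg_le_abs ((-M) - ⟪x, u⟫)
          linarith
        have hfp : ρ - r < |M - ⟪x, u⟫| := by
          have h1 : ρ + 1 ≤ M - ⟪x, u⟫ := by rw [hM]; linarith
          have h2 := le_abs_self (M - ⟪x, u⟫)
          linarith
        have hKm : Ψ (p, -M) ∉ K := hfar (-M) hfm
        have hKp : Ψ (p, M) ∉ K := hfar M hfp
        have hmemA : Ψ (p, -M) ∈ Fs := by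
          have hE : Ψ (p, -M) ∈ E := by
            show ⟪Ψ (p, -M), u⟫ < 0
            rw [hcoordu]
            have : (0:ℝ) < M := by rw [hM]; positivity
            linarith
          exact (hFstar (Ψ (p, -M)) hKm).2 hE
        have hmemB : Ψ (p, M) ∉ Fs := by
          intro hmem
          have h2 : ⟪Ψ (p, M), u⟫ < 0 := (hFstar (Ψ (p, M)) hKp).1 hmem
          rw [hcoordu] at h2
          have : (0:ℝ) < M := by rw [hM]; positivity
          linarith
        have hcont : Continuous fun t : ℝ => Ψ (p, t) := by
          have hcont2 : Continuous fun t : ℝ => Ψ (p, 0) + t • u :=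
            continuous_const.add (continuous_id.smul continuous_const)
          apply hcont2.congr
          intro t
          have h1 := psi_sub b p 0 t
          rw [hb0', sub_zero] at h1
          have : Ψ (p, t) - Ψ (p, 0) = t • u := h1
          rw [← this]
          abel
        have hseg : IsPreconnected ((fun t : ℝ => Ψ (p, t)) '' Icc (-M) M) :=
          isPreconnected_Icc.image _ hcont.continuousOn
        have hMM : -M ≤ M := by
          have : (0:ℝ) < M := by rw [hM]; positivity
          linarith
        obtain ⟨w, hwseg, hwfr⟩ := exists_mem_frontier_of_isPreconnected hseg
          (mem_image_of_mem _ (left_mem_Icc.2 hMM)) (mem_image_of_mem _ (right_mem_Icc.2 hMM))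
          hmemA hmemB
        obtain ⟨tw, _, rfl⟩ := hwseg
        have hwK : Ψ (p, tw) ∉ K := by
          intro hmem
          exact hp (hPmem p tw ⟨hwfr, hmem⟩)
        have h0 : ⟪Ψ (p, tw), u⟫ = 0 := hH' _ hwfr hwK
        rw [hcoordu] at h0
        rw [← h0]
        exact hwfr
      apply measure_mono
      intro t ht
      have h1 : |⟪Ψ (p, t), u⟫| < r := ht.1
      rw [hcoordu] at h1
      refine ⟨mem_thickening_iff.2 ⟨Ψ (p, 0), hΨ0, ?_⟩, ht.2⟩
      rw [hdistΨ, sub_zero]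
      exact h1
  have hmp := psi_measurePreserving b
  have hvol : ∀ A : Set (EuclideanSpace ℝ (Fin (k + 1))), MeasurableSet A →
      volume A = ∫⁻ p, volume {t : ℝ | Ψ (p, t) ∈ A} := by
    intro A hA
    rw [← hmp.measure_preimage hA.nullMeasurableSet,
      Measure.prod_apply (hmp.measurable hA)]
    rfl
  have hSopen : IsOpen S :=
    isOpen_lt (continuous_id.inner continuous_const).abs continuous_const
  have hGmb : MeasurableSet (thickening r (frontier Fs) ∩ ball x ρ) :=
    (isOpen_thickening.inter isOpen_ball).measurableSet
  have hSmb : MeasurableSet (S ∩ ball x ρ) := (hSopen.inter isOpen_ball).measurableSet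
  have hmain : volume (S ∩ ball x ρ) ≤ volume (thickening r (frontier Fs) ∩ ball x ρ) := by
    rw [hvol _ hSmb, hvol _ hGmb]
    exact lintegral_mono hslice
  have hperE : perR (k + 1) r E (ball x ρ)
      = volume (S ∩ ball x ρ) / ENNReal.ofReal (2 * r) := by
    rw [perR, hdensE, hfrE, hSthick]
  have hperF : perR (k + 1) r F (ball x ρ)
      = volume (thickening r (frontier Fs) ∩ ball x ρ) / ENNReal.ofReal (2 * r) := rfl
  rw [hperE, hperF]
  exact ENNReal.div_le_div_right hmain _
end
end
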